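/- arXiv:1712.00814 — 4 statements merged into one kernel-verified Lean document; each statement's English description precedes it below -/
import Mathlib

section
/- Let G be a group acting acylindrically by isometries on a hyperbolic geodesic metric space S. Then every element of G is either elliptic or loxodromic with respect to this action. -/
section MetricDefs

/-- A geodesic parametrization from `x` to `y`: an isometric embedding of
`[0, dist x y]` sending the endpoints to `x` and `y`. -/
def IsGeodesicParam {S : Type*} [MetricSpace S] (γ : ℝ → S) (x y : S) : Prop :=
  γ 0 = x ∧ γ (dist x y) = y ∧
    ∀ s ∈ Set.Icc (0 : ℝ) (dist x y), ∀ t ∈ Set.Icc (0 : ℝ) (dist x y),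
      dist (γ s) (γ t) = |s - t|

/-- A geodesic metric space: every two points are joined by a geodesic. -/
def GeodesicSpace (S : Type*) [MetricSpace S] : Prop :=
  ∀ x y : S, ∃ γ : ℝ → S, IsGeodesicParam γ x y

/-- The image of a geodesic side. -/
def geodSide {S : Type*} [MetricSpace S] (γ : ℝ → S) (x y : S) : Set S :=
  γ '' Set.Icc (0 : ℝ) (dist x y)

/-- `A` is contained in the union of the `δ`-neighborhoods of `B` and `C`. -/
def SideThin {S : Type*} [MetricSpace S] (δ : ℝ) (A B C : Set S) : Prop :=
  ∀ p ∈ A, ∃ q ∈ B ∪ C, dist p q ≤ δ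

/-- A hyperbolic space: a geodesic metric space in which, for some `δ ≥ 0`,
every side of every geodesic triangle is contained in the union of the
`δ`-neighborhoods of the other two sides. -/
def HyperbolicSpace (S : Type*) [MetricSpace S] : Prop :=
  GeodesicSpace S ∧
    ∃ δ : ℝ, 0 ≤ δ ∧
      ∀ (x y z : S) (γ₁ γ₂ γ₃ : ℝ → S),
        IsGeodesicParam γ₁ x y → IsGeodesicParam γ₂ y z → IsGeodesicParam γ₃ x z →
          SideThin δ (geodSide γ₁ x y) (geodSide γ₂ y z) (geodSide γ₃ x z) ∧
          SideThin δ (geodSide γ₂ y z) (geodSide γ₁ x y) (geodSide γ₃ x z) ∧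
          SideThin δ (geodSide γ₃ x z) (geodSide γ₁ x y) (geodSide γ₂ y z)

variable (G : Type*) [Group G] (S : Type*) [MetricSpace S] [MulAction G S]

/-- The action of `G` on `S` is by isometries. -/
def IsIsometricAction : Prop := ∀ (g : G) (x y : S), dist (g • x) (g • y) = dist x y

/-- The action of `G` on `S` is acylindrical: for every `ε > 0` there are `R, N > 0`
such that for all `x y` with `dist x y ≥ R` there are at most `N` elements `g` moving
both `x` and `y` by at most `ε`. -/
def AcylindricalAction : Prop :=
  ∀ ε : ℝ, 0 < ε → ∃ (R : ℝ) (N : ℕ), 0 < R ∧ 0 < N ∧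
    ∀ x y : S, R ≤ dist x y →
      {g : G | dist x (g • x) ≤ ε ∧ dist y (g • y) ≤ ε}.encard ≤ (N : ℕ∞)

/-- Some `G`-orbit in `S` is unbounded. -/
def UnboundedOrbits : Prop :=
  ∃ s : S, ¬ Bornology.IsBounded (Set.range fun g : G => g • s)

variable {G}

/-- `g` is loxodromic: orbit maps of `⟨g⟩` are quasi-isometric embeddings of `ℤ`. -/
def IsLoxodromic (g : G) : Prop :=
  ∀ s : S, ∃ c : ℝ, 0 < c ∧ ∀ n : ℤ, c * |(n : ℝ)| ≤ dist s (g ^ n • s)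

/-- `g` is elliptic: all orbits of `⟨g⟩` are bounded. -/
def IsElliptic (g : G) : Prop :=
  ∀ s : S, Bornology.IsBounded (Set.range fun n : ℤ => g ^ n • s)

/-- `g` satisfies the weak proper discontinuity (WPD) condition. -/
def IsWPD (g : G) : Prop :=
  ∀ ε : ℝ, 0 < ε → ∀ s : S, ∃ M : ℕ,
    {a : G | dist s (a • s) < ε ∧ dist (g ^ M • s) (a • g ^ M • s) < ε}.Finite

end MetricDefs

/-- A group is virtually cyclic if it contains a cyclic subgroup of finite index. -/
def VirtuallyCyclic (G : Type*) [Group G] : Prop :=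
  ∃ H : Subgroup G, IsCyclic H ∧ H.FiniteIndex

/-- A group is acylindrically hyperbolic if it is not virtually cyclic and admits an
acylindrical isometric action with unbounded orbits on a hyperbolic geodesic metric space. -/
def AcylindricallyHyperbolic (G : Type*) [Group G] : Prop :=
  ¬ VirtuallyCyclic G ∧
    ∃ (S : Type) (_ : MetricSpace S) (_ : MulAction G S),
      IsIsometricAction G S ∧ HyperbolicSpace S ∧ AcylindricalAction G S ∧ UnboundedOrbits G S

namespace AAH

variable {S : Type*} [MetricSpace S]

/-- Gromov product -/
noncomputable def gp (p a b : S) : ℝ := (dist p a + dist p b - dist a b) / 2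

lemma gp_nonneg (p a b : S) : 0 ≤ gp p a b := by
  have := dist_triangle a p b
  unfold gp
  rw [dist_comm a p] at this
  linarith

lemma gp_le_left (p a b : S) : gp p a b ≤ dist p a := by
  have := dist_triangle p a b
  unfold gp; linarith

lemma gp_le_right (p a b : S) : gp p a b ≤ dist p b := by
  have := dist_triangle p b a
  unfold gp; rw [dist_comm b a] at this; linarith

lemma gp_symm (p a b : S) : gp p a b = gp p b a := by
  unfold gp; rw [dist_comm a b]; ring

lemma gp_flip (p a b : S) : gp p a b = dist p a - gp a p b := by
  unfold gp; rw [dist_comm a p]; ring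

/-- Thinness predicate with constant δ -/
def Thin (δ : ℝ) (S : Type*) [MetricSpace S] : Prop :=
  ∀ (x y z : S) (γ₁ γ₂ γ₃ : ℝ → S),
    IsGeodesicParam γ₁ x y → IsGeodesicParam γ₂ y z → IsGeodesicParam γ₃ x z →
      SideThin δ (geodSide γ₁ x y) (geodSide γ₂ y z) (geodSide γ₃ x z) ∧
      SideThin δ (geodSide γ₂ y z) (geodSide γ₁ x y) (geodSide γ₃ x z) ∧
      SideThin δ (geodSide γ₃ x z) (geodSide γ₁ x y) (geodSide γ₂ y z)

lemma Thin.mono {δ δ' : ℝ} (h : Thin δ S) (hle : δ ≤ δ') : Thin δ' S := by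
  intro x y z γ₁ γ₂ γ₃ h₁ h₂ h₃
  obtain ⟨t1, t2, t3⟩ := h x y z γ₁ γ₂ γ₃ h₁ h₂ h₃
  refine ⟨?_, ?_, ?_⟩ <;> intro p hp
  · obtain ⟨q, hq, hd⟩ := t1 p hp; exact ⟨q, hq, hd.trans hle⟩
  · obtain ⟨q, hq, hd⟩ := t2 p hp; exact ⟨q, hq, hd.trans hle⟩
  · obtain ⟨q, hq, hd⟩ := t3 p hp; exact ⟨q, hq, hd.trans hle⟩

section GeodBasics

variable {γ : ℝ → S} {x y : S}

lemma geod_dist0 (hγ : IsGeodesicParam γ x y) {t : ℝ} (ht : t ∈ Set.Icc (0:ℝ) (dist x y)) :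
    dist x (γ t) = t := by
  have h0 : (0:ℝ) ∈ Set.Icc (0:ℝ) (dist x y) := ⟨le_refl _, dist_nonneg⟩
  have := hγ.2.2 0 h0 t ht
  rw [hγ.1] at this
  rw [this, abs_of_nonpos (by linarith [ht.1]), neg_sub, sub_zero]

lemma geod_dist1 (hγ : IsGeodesicParam γ x y) {t : ℝ} (ht : t ∈ Set.Icc (0:ℝ) (dist x y)) :
    dist (γ t) y = dist x y - t := by
  have hD : dist x y ∈ Set.Icc (0:ℝ) (dist x y) := ⟨dist_nonneg, le_refl _⟩
  have := hγ.2.2 t ht (dist x y) hD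
  rw [hγ.2.1] at this
  rw [this, abs_of_nonpos (by linarith [ht.2])]; ring

lemma geod_mem (hγ : IsGeodesicParam γ x y) {t : ℝ} (ht : t ∈ Set.Icc (0:ℝ) (dist x y)) :
    γ t ∈ geodSide γ x y := ⟨t, ht, rfl⟩

lemma left_mem_side (hγ : IsGeodesicParam γ x y) : x ∈ geodSide γ x y := by
  have : γ 0 ∈ geodSide γ x y := geod_mem hγ ⟨le_refl _, dist_nonneg⟩
  rwa [hγ.1] at this

lemma right_mem_side (hγ : IsGeodesicParam γ x y) : y ∈ geodSide γ x y := by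
  have : γ (dist x y) ∈ geodSide γ x y := geod_mem hγ ⟨dist_nonneg, le_refl _⟩
  rwa [hγ.2.1] at this

lemma side_exists_param (hγ : IsGeodesicParam γ x y) {q : S} (hq : q ∈ geodSide γ x y) :
    ∃ t ∈ Set.Icc (0:ℝ) (dist x y), γ t = q ∧ dist x q = t ∧ dist q y = dist x y - t := by
  obtain ⟨t, ht, rfl⟩ := hq
  exact ⟨t, ht, rfl, geod_dist0 hγ ht, geod_dist1 hγ ht⟩

lemma side_dist_add (hγ : IsGeodesicParam γ x y) {q : S} (hq : q ∈ geodSide γ x y) :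
    dist x q + dist q y = dist x y := by
  obtain ⟨t, _, _, h1, h2⟩ := side_exists_param hγ hq
  rw [h1, h2]; ring

lemma side_dist_left_le (hγ : IsGeodesicParam γ x y) {q : S} (hq : q ∈ geodSide γ x y) :
    dist x q ≤ dist x y := by
  have := side_dist_add hγ hq
  have := dist_nonneg (x := q) (y := y)
  linarith

lemma side_dist_right_le (hγ : IsGeodesicParam γ x y) {q : S} (hq : q ∈ geodSide γ x y) :
    dist q y ≤ dist x y := by
  have := side_dist_add hγ hq
  have := dist_nonneg (x := x) (y := q)
  linarith

lemma geod_reverse (hγ : IsGeodesicParam γ x y) :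
    IsGeodesicParam (fun t => γ (dist x y - t)) y x := by
  have hD : dist y x = dist x y := dist_comm y x
  refine ⟨by simp [hγ.2.1], by simp [hD, hγ.1], ?_⟩
  intro s hs t ht
  rw [hD] at hs ht
  have hs' : dist x y - s ∈ Set.Icc (0:ℝ) (dist x y) := ⟨by linarith [hs.2], by linarith [hs.1]⟩
  have ht' : dist x y - t ∈ Set.Icc (0:ℝ) (dist x y) := ⟨by linarith [ht.2], by linarith [ht.1]⟩
  rw [hγ.2.2 _ hs' _ ht']
  rw [show dist x y - s - (dist x y - t) = -(s - t) by ring, abs_neg]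

lemma geodSide_reverse (hγ : IsGeodesicParam γ x y) :
    geodSide (fun t => γ (dist x y - t)) y x = geodSide γ x y := by
  unfold geodSide
  rw [dist_comm y x]
  ext q
  constructor
  · rintro ⟨t, ht, rfl⟩
    exact ⟨dist x y - t, ⟨by linarith [ht.2], by linarith [ht.1]⟩, rfl⟩
  · rintro ⟨t, ht, rfl⟩
    exact ⟨dist x y - t, ⟨by linarith [ht.2], by linarith [ht.1]⟩, by simp⟩

lemma geod_continuousOn (hγ : IsGeodesicParam γ x y) :
    ContinuousOn γ (Set.Icc (0:ℝ) (dist x y)) := by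
  have : LipschitzOnWith 1 γ (Set.Icc (0:ℝ) (dist x y)) := by
    rw [lipschitzOnWith_iff_dist_le_mul]
    intro s hs t ht
    rw [hγ.2.2 s hs t ht]
    simp [Real.dist_eq]
  exact this.continuousOn

lemma side_compact (hγ : IsGeodesicParam γ x y) : IsCompact (geodSide γ x y) :=
  isCompact_Icc.image_of_continuousOn (geod_continuousOn hγ)

lemma side_nonempty (hγ : IsGeodesicParam γ x y) : (geodSide γ x y).Nonempty :=
  ⟨x, left_mem_side hγ⟩

lemma gp_le_of_mem_side (hγ : IsGeodesicParam γ x y) {p q : S} (hq : q ∈ geodSide γ x y) :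
    gp p x y ≤ dist p q := by
  have h1 := dist_triangle p x q  -- no
  have hadd := side_dist_add hγ hq
  have h2 : dist p x ≤ dist p q + dist q x := dist_triangle p q x
  have h3 : dist p y ≤ dist p q + dist q y := dist_triangle p q y
  unfold gp
  rw [dist_comm q x] at h2
  linarith

end GeodBasics

end AAH

namespace AAH
section Hyp

variable {S : Type*} [MetricSpace S] {δ : ℝ}

/-- Fellow-traveling of two geodesics from a common point. -/
lemma fellow (hδ : 0 < δ) (hgeo : GeodesicSpace S) (hthin : Thin δ S)
    {p a b : S} {γ₁ γ₂ : ℝ → S} (h₁ : IsGeodesicParam γ₁ p a) (h₂ : IsGeodesicParam γ₂ p b)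
    {t : ℝ} (ht0 : 0 ≤ t) (ht : t + δ < gp p a b) :
    dist (γ₁ t) (γ₂ t) ≤ 2 * δ := by
  obtain ⟨γ₃, h₃⟩ := hgeo a b
  have hta : t ∈ Set.Icc (0:ℝ) (dist p a) :=
    ⟨ht0, by linarith [gp_le_left p a b]⟩
  have htb : t ∈ Set.Icc (0:ℝ) (dist p b) :=
    ⟨ht0, by linarith [gp_le_right p a b]⟩
  obtain ⟨thin1, _, _⟩ := hthin p a b γ₁ γ₃ γ₂ h₁ h₃ h₂
  obtain ⟨q, hq, hdq⟩ := thin1 (γ₁ t) (geod_mem h₁ hta)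
  have hdpu : dist p (γ₁ t) = t := geod_dist0 h₁ hta
  rcases hq with hq | hq
  · -- q on side a-b: contradiction
    exfalso
    have h1 : gp p a b ≤ dist p q := gp_le_of_mem_side h₃ hq
    have h2 : dist p q ≤ dist p (γ₁ t) + dist (γ₁ t) q := dist_triangle _ _ _
    rw [hdpu] at h2
    linarith
  · -- q on side p-b
    obtain ⟨r, hr, hrq, hdr, _⟩ := side_exists_param h₂ hq
    have habs : |r - t| ≤ δ := by
      have h5 : |dist q p - dist (γ₁ t) p| ≤ dist q (γ₁ t) := abs_dist_sub_le _ _ _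
      rw [dist_comm q p, hdr, dist_comm (γ₁ t) p, hdpu, dist_comm q (γ₁ t)] at h5
      have h6 := abs_le.mp h5
      rw [abs_le]
      constructor <;> linarith [h6.1, h6.2]
    have h7 : dist (γ₂ r) (γ₂ t) = |r - t| := h₂.2.2 r hr t htb
    calc dist (γ₁ t) (γ₂ t) ≤ dist (γ₁ t) q + dist q (γ₂ t) := dist_triangle _ _ _
      _ = dist (γ₁ t) q + dist (γ₂ r) (γ₂ t) := by rw [hrq]
      _ ≤ δ + |r - t| := by rw [h7]; linarith
      _ ≤ 2 * δ := by linarith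

/-- A geodesic from `a` to `b` passes within `gp p a b + 2δ` of `p`. -/
lemma exists_gp_point (hgeo : GeodesicSpace S) (hthin : Thin δ S)
    (p : S) {a b : S} {γab : ℝ → S} (hab : IsGeodesicParam γab a b) :
    ∃ w ∈ geodSide γab a b, dist p w ≤ gp p a b + 2 * δ := by
  obtain ⟨γ₁, h₁⟩ := hgeo p a
  obtain ⟨γ₂, h₂⟩ := hgeo p b
  set D := dist p a with hD
  have hcab : IsCompact (geodSide γab a b) := side_compact hab
  have hcpb : IsCompact (geodSide γ₂ p b) := side_compact h₂
  have hnab : (geodSide γab a b).Nonempty := side_nonempty hab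
  have hnpb : (geodSide γ₂ p b).Nonempty := side_nonempty h₂
  set F : ℝ → ℝ := fun t =>
    Metric.infDist (γ₁ t) (geodSide γab a b) - Metric.infDist (γ₁ t) (geodSide γ₂ p b) with hF
  have hcont : ContinuousOn F (Set.Icc (0:ℝ) D) :=
    ContinuousOn.sub
      ((Metric.continuous_infDist_pt _).comp_continuousOn (geod_continuousOn h₁))
      ((Metric.continuous_infDist_pt _).comp_continuousOn (geod_continuousOn h₁))
  have hD0 : (0:ℝ) ≤ D := dist_nonneg
  have hF0 : 0 ≤ F 0 := by
    have hz : Metric.infDist (γ₁ 0) (geodSide γ₂ p b) = 0 := by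
      rw [h₁.1]; exact Metric.infDist_zero_of_mem (left_mem_side h₂)
    simp only [hF, hz, sub_zero]
    exact Metric.infDist_nonneg
  have hFD : F D ≤ 0 := by
    have hz : Metric.infDist (γ₁ D) (geodSide γab a b) = 0 := by
      rw [h₁.2.1]; exact Metric.infDist_zero_of_mem (left_mem_side hab)
    simp only [hF, hz, zero_sub, neg_nonpos]
    exact Metric.infDist_nonneg
  obtain ⟨t₀, ht₀, hFt₀⟩ := intermediate_value_Icc' hD0 hcont ⟨hFD, hF0⟩
  -- at t₀ both infDists are ≤ δ
  obtain ⟨thin1, _, _⟩ := hthin p a b γ₁ γab γ₂ h₁ hab h₂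
  obtain ⟨q, hq, hdq⟩ := thin1 (γ₁ t₀) (geod_mem h₁ ht₀)
  have hboth : Metric.infDist (γ₁ t₀) (geodSide γab a b) ≤ δ ∧
      Metric.infDist (γ₁ t₀) (geodSide γ₂ p b) ≤ δ := by
    have heq : Metric.infDist (γ₁ t₀) (geodSide γab a b)
        = Metric.infDist (γ₁ t₀) (geodSide γ₂ p b) := by
      have := hFt₀; simp only [hF] at this; linarith
    rcases hq with hq | hq
    · have h9 : Metric.infDist (γ₁ t₀) (geodSide γab a b) ≤ dist (γ₁ t₀) q :=
        Metric.infDist_le_dist_of_mem hq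
      exact ⟨h9.trans hdq, by rw [← heq]; exact h9.trans hdq⟩
    · have h9 : Metric.infDist (γ₁ t₀) (geodSide γ₂ p b) ≤ dist (γ₁ t₀) q :=
        Metric.infDist_le_dist_of_mem hq
      exact ⟨by rw [heq]; exact h9.trans hdq, h9.trans hdq⟩
  obtain ⟨w, hw, hdw⟩ := hcab.exists_infDist_eq_dist hnab (γ₁ t₀)
  obtain ⟨q', hq', hdq'⟩ := hcpb.exists_infDist_eq_dist hnpb (γ₁ t₀)
  have hdw' : dist (γ₁ t₀) w ≤ δ := by rw [← hdw]; exact hboth.1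
  have hdq'2 : dist (γ₁ t₀) q' ≤ δ := by rw [← hdq']; exact hboth.2
  -- now the computation
  have hdpu : dist p (γ₁ t₀) = t₀ := geod_dist0 h₁ ht₀
  have hdua : dist (γ₁ t₀) a = D - t₀ := geod_dist1 h₁ ht₀
  obtain ⟨r', hr', hrq', hdr', hdr'b⟩ := side_exists_param h₂ hq'
  -- dist p q' = r', dist q' b = dist p b - r'
  have h1 : t₀ ≤ dist p q' + δ := by
    have h5 : dist p (γ₁ t₀) ≤ dist p q' + dist q' (γ₁ t₀) := dist_triangle _ _ _
    rw [hdpu, dist_comm q' (γ₁ t₀)] at h5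
    linarith
  have h2 : dist (γ₁ t₀) b ≥ dist a b - dist (γ₁ t₀) a := by
    have := dist_triangle a (γ₁ t₀) b
    rw [dist_comm a (γ₁ t₀)] at this
    linarith
  have h3 : dist q' b ≥ dist (γ₁ t₀) b - δ := by
    have := dist_triangle (γ₁ t₀) q' b
    linarith
  have ht₀gp : t₀ ≤ gp p a b + δ := by
    have e1 : dist p q' = dist p b - dist q' b := by rw [hdr', hdr'b]; ring
    unfold gp
    rw [hdua] at h2
    -- 2 t₀ ≤ t₀ + dist p q' + δ = t₀ + dist p b - dist q' b + δ
    -- ≤ (D - dist u a stuff)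
    nlinarith [h1, h2, h3, e1]
  refine ⟨w, hw, ?_⟩
  calc dist p w ≤ dist p (γ₁ t₀) + dist (γ₁ t₀) w := dist_triangle _ _ _
    _ ≤ t₀ + δ := by rw [hdpu]; linarith
    _ ≤ gp p a b + 2 * δ := by linarith

/-- The four-point (Gromov hyperbolicity) inequality with constant 3δ. -/
lemma four_point (hgeo : GeodesicSpace S) (hthin : Thin δ S) (p a b c : S) :
    min (gp p a c) (gp p c b) - 3 * δ ≤ gp p a b := by
  obtain ⟨γab, hab⟩ := hgeo a b
  obtain ⟨w, hw, hdw⟩ := exists_gp_point hgeo hthin p hab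
  obtain ⟨γac, hac⟩ := hgeo a c
  obtain ⟨γcb, hcb⟩ := hgeo c b
  obtain ⟨_, _, thin3⟩ := hthin a c b γac γcb γab hac hcb hab
  obtain ⟨v, hv, hdv⟩ := thin3 w hw
  rcases hv with hv | hv
  · have h1 : gp p a c ≤ dist p v := gp_le_of_mem_side hac hv
    have h2 : dist p v ≤ dist p w + dist w v := dist_triangle _ _ _
    have : gp p a c ≤ gp p a b + 3 * δ := by linarith
    calc min (gp p a c) (gp p c b) - 3*δ ≤ gp p a c - 3*δ := by
          linarith [min_le_left (gp p a c) (gp p c b)]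
      _ ≤ gp p a b := by linarith
  · have h1 : gp p c b ≤ dist p v := gp_le_of_mem_side hcb hv
    have h2 : dist p v ≤ dist p w + dist w v := dist_triangle _ _ _
    have : gp p c b ≤ gp p a b + 3 * δ := by linarith
    calc min (gp p a c) (gp p c b) - 3*δ ≤ gp p c b - 3*δ := by
          linarith [min_le_right (gp p a c) (gp p c b)]
      _ ≤ gp p a b := by linarith

end Hyp
end AAH

namespace AAH
section Act

variable {G : Type*} [Group G] {S : Type*} [MetricSpace S] [MulAction G S] {δ : ℝ}

variable {g : G}

lemma gp_smul (hiso : IsIsometricAction G S) (c : G) (p a b : S) :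
    gp (c • p) (c • a) (c • b) = gp p a b := by
  unfold gp; rw [hiso c p a, hiso c p b, hiso c a b]

lemma geod_smul (hiso : IsIsometricAction G S) (c : G) {γ : ℝ → S} {x y : S}
    (hγ : IsGeodesicParam γ x y) :
    IsGeodesicParam (fun t => c • γ t) (c • x) (c • y) := by
  have hd : dist (c • x) (c • y) = dist x y := hiso c x y
  refine ⟨by simp [hγ.1], by simp [hd, hγ.2.1], ?_⟩
  intro s hs t ht
  rw [hd] at hs ht
  simp only []
  rw [hiso c (γ s) (γ t)]
  exact hγ.2.2 s hs t ht

/-- The criterion for loxodromic behaviour along a broken orbit path. -/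
lemma broken (hδ : 0 < δ) (hgeo : GeodesicSpace S) (hthin : Thin δ S)
    (hiso : IsIsometricAction G S) {h : G} {y : S}
    (hcond : dist y (h • y) + 6 * δ < dist y (h • h • y)) :
    ∀ n : ℕ, 1 ≤ n →
      (n : ℝ) * (dist y (h • h • y) - dist y (h • y) - 6 * δ) ≤ dist y (h ^ n • y) := by
  set L := dist y (h • y) with hL
  set K := gp (h • y) y (h • h • y) with hK
  have hdhy : ∀ (c : G) (a b : S), dist (c • a) (c • b) = dist a b := fun c a b => hiso c a b
  have hLK : dist y (h • h • y) = 2 * L - 2 * K := by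
    have : K = (dist (h • y) y + dist (h • y) (h • h • y) - dist y (h • h • y)) / 2 := rfl
    rw [dist_comm (h • y) y, hdhy h y (h • y)] at this
    rw [this]; ring
  have hcond' : L > 2 * K + 6 * δ := by rw [hLK] at hcond; linarith
  have hKnn : 0 ≤ K := gp_nonneg _ _ _
  set θ := dist y (h • h • y) - L - 6 * δ with hθ
  have hθeq : θ = L - 2 * K - 6 * δ := by rw [hθ, hLK]; ring
  have hθpos : 0 < θ := by rw [hθeq]; linarith
  -- step A: Gromov products along the orbit stay small
  have hdist_step : ∀ i : ℕ, dist (h ^ i • y) (h ^ (i+1) • y) = L := by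
    intro i
    have : h ^ (i+1) • y = h ^ i • (h • y) := by rw [pow_succ, mul_smul]
    rw [this, hdhy]
  have hA : ∀ i : ℕ, 1 ≤ i → gp (h ^ i • y) y (h ^ (i+1) • y) ≤ K + 3 * δ := by
    intro i
    induction i with
    | zero => intro hi; exact absurd hi (by omega)
    | succ i IH =>
      intro _
      rcases Nat.eq_or_lt_of_le (Nat.one_le_iff_ne_zero.mpr (Nat.succ_ne_zero i)) with hi1 | hi1
      · -- i + 1 = 1, base case
        have hi0 : i = 0 := by omega
        subst hi0
        have : gp (h ^ 1 • y) y (h ^ 2 • y) = K := by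
          rw [hK, pow_one, pow_two, mul_smul]
        rw [this]; linarith
      · have hi : 1 ≤ i := by omega
        have hAi := IH hi
        -- four point at p = h^(i+1) y, with a = h^i y, b = h^(i+2) y, c = y
        have h4 := four_point hgeo hthin (h ^ (i+1) • y) (h ^ i • y) (h ^ (i+2) • y) y
        have hab : gp (h ^ (i+1) • y) (h ^ i • y) (h ^ (i+2) • y) = K := by
          have e1 : h ^ (i+1) • y = h ^ i • (h • y) := by rw [pow_succ, mul_smul]
          have e2 : h ^ (i+2) • y = h ^ i • (h • h • y) := by
            rw [show i + 2 = i + 1 + 1 by ring, pow_succ, pow_succ, mul_smul, mul_smul]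
          have e3 : h ^ i • y = h ^ i • y := rfl
          rw [e1, e2, show h ^ i • y = h ^ i • y from rfl]
          rw [← gp_smul hiso (h ^ i) (h • y) y (h • h • y)] at hK
          rw [hK]
        have hac : gp (h ^ (i+1) • y) (h ^ i • y) y = L - gp (h ^ i • y) y (h ^ (i+1) • y) := by
          rw [gp_flip (h ^ (i+1) • y) (h ^ i • y) y]
          have : dist (h ^ (i+1) • y) (h ^ i • y) = L := by
            rw [dist_comm]; exact hdist_step i
          rw [this]
          congr 1
          rw [gp_symm]
        have hbig : K + 3 * δ < gp (h ^ (i+1) • y) (h ^ i • y) y := by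
          rw [hac]; linarith
        by_contra hcontra
        push_neg at hcontra
        have hmin : K + 3 * δ <
            min (gp (h ^ (i+1) • y) (h ^ i • y) y) (gp (h ^ (i+1) • y) y (h ^ (i+2) • y)) := by
          apply lt_min hbig
          have : gp (h ^ (i+1) • y) y (h ^ (i+1+1) • y) = gp (h ^ (i+1) • y) y (h ^ (i+2) • y) := by
            norm_num
          rw [← this]; exact hcontra
        rw [hab] at h4
        linarith [h4, hmin]
  -- step B: distance growth
  intro n hn
  induction n with
  | zero => omega
  | succ n IH =>
    rcases Nat.eq_or_lt_of_le hn with h1 | h1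
    · -- n + 1 = 1
      have : n = 0 := by omega
      subst this
      rw [pow_one]
      push_cast
      rw [hθeq] at hθpos ⊢
      linarith
    · have hn1 : 1 ≤ n := by omega
      have hIH := IH hn1
      have hAn := hA n hn1
      have key : dist y (h ^ (n+1) • y) =
          dist y (h ^ n • y) + L - 2 * gp (h ^ n • y) y (h ^ (n+1) • y) := by
        have : gp (h ^ n • y) y (h ^ (n+1) • y) =
            (dist (h ^ n • y) y + dist (h ^ n • y) (h ^ (n+1) • y) - dist y (h ^ (n+1) • y)) / 2 := rfl
        rw [hdist_step n, dist_comm (h ^ n • y) y] at this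
        rw [this]; ring
      rw [key]
      push_cast
      rw [hθeq] at hθpos hIH ⊢
      linarith

end Act
end AAH

namespace AAH
section Dia

variable {G : Type*} [Group G] {S : Type*} [MetricSpace S] [MulAction G S] {δ : ℝ} {g : G}

/-- The "no power is loxodromic" condition. -/
def Diamond (g : G) (S : Type*) [MetricSpace S] [MulAction G S] (δ : ℝ) : Prop :=
  ∀ (y : S) (j : ℤ), dist y (g ^ (2 * j) • y) ≤ dist y (g ^ j • y) + 6 * δ

lemma two_smul_eq (g : G) (j : ℤ) (y : S) : g ^ (2 * j) • y = g ^ j • g ^ j • y := by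
  rw [two_mul, zpow_add, mul_smul]

lemma gp_lower (hiso : IsIsometricAction G S) (hdia : Diamond g S δ) (j : ℤ) (y : S) :
    dist y (g ^ j • y) / 2 - 3 * δ ≤ gp (g ^ j • y) y (g ^ (2 * j) • y) := by
  have h1 : dist (g ^ j • y) (g ^ (2 * j) • y) = dist y (g ^ j • y) := by
    rw [two_smul_eq, hiso]
  have h2 := hdia y j
  unfold gp
  rw [h1, dist_comm (g ^ j • y) y]
  linarith

lemma flip1 (hδ : 0 < δ) (hgeo : GeodesicSpace S) (hthin : Thin δ S)
    (hiso : IsIsometricAction G S) (hdia : Diamond g S δ) (j : ℤ) {y : S} {γ : ℝ → S}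
    (hγ : IsGeodesicParam γ y (g ^ j • y)) {s : ℝ} (hs0 : 0 ≤ s)
    (hs : s ≤ dist y (g ^ j • y) / 2 - 6 * δ) :
    dist (γ (dist y (g ^ j • y) - s)) (g ^ j • γ s) ≤ 2 * δ := by
  set L := dist y (g ^ j • y) with hL
  have hrev : IsGeodesicParam (fun t => γ (L - t)) (g ^ j • y) y := geod_reverse hγ
  have htr : IsGeodesicParam (fun t => g ^ j • γ t) (g ^ j • y) (g ^ (2*j) • y) := by
    have := geod_smul hiso (g ^ j) hγ
    rwa [← two_smul_eq] at this
  have hgp := gp_lower hiso hdia j y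
  exact fellow hδ hgeo hthin hrev htr hs0 (by rw [← hL] at hgp; linarith)

lemma midpoint_moved (hδ : 0 < δ) (hgeo : GeodesicSpace S) (hthin : Thin δ S)
    (hiso : IsIsometricAction G S) (hdia : Diamond g S δ) (j : ℤ) {y : S} {γ : ℝ → S}
    (hγ : IsGeodesicParam γ y (g ^ j • y)) :
    dist (γ (dist y (g ^ j • y) / 2)) (g ^ j • γ (dist y (g ^ j • y) / 2)) ≤ 24 * δ := by
  set L := dist y (g ^ j • y) with hL
  have hL0 : 0 ≤ L := dist_nonneg
  have hmem : L / 2 ∈ Set.Icc (0:ℝ) L := ⟨by linarith, by linarith⟩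
  rcases le_or_gt L (12 * δ) with hcase | hcase
  · have h1 : dist y (γ (L / 2)) = L / 2 := geod_dist0 hγ hmem
    have h2 : dist (g ^ j • y) (g ^ j • γ (L / 2)) = L / 2 := by rw [hiso]; exact h1
    calc dist (γ (L/2)) (g ^ j • γ (L/2))
        ≤ dist (γ (L/2)) y + dist y (g ^ j • y) + dist (g ^ j • y) (g ^ j • γ (L/2)) :=
          dist_triangle4 _ _ _ _
      _ ≤ L / 2 + L + L / 2 := by rw [dist_comm (γ (L/2)) y, h1, h2]
      _ ≤ 24 * δ := by linarith
  · set s := L / 2 - 6 * δ with hs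
    have hs0 : 0 ≤ s := by rw [hs]; linarith
    have hkey := flip1 hδ hgeo hthin hiso hdia j hγ hs0 (le_refl _)
    have hmem2 : L - s ∈ Set.Icc (0:ℝ) L := ⟨by rw [hs]; linarith, by rw [hs]; linarith⟩
    have hmem3 : s ∈ Set.Icc (0:ℝ) L := ⟨hs0, by rw [hs]; linarith⟩
    have e1 : dist (γ (L/2)) (γ (L - s)) = 6 * δ := by
      rw [hγ.2.2 _ hmem _ hmem2, hs]
      rw [show L/2 - (L - (L/2 - 6*δ)) = -(6*δ) by ring, abs_neg, abs_of_nonneg (by linarith)]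
    have e2 : dist (g ^ j • γ s) (g ^ j • γ (L/2)) = 6 * δ := by
      rw [hiso, hγ.2.2 _ hmem3 _ hmem, hs]
      rw [show L/2 - 6*δ - L/2 = -(6*δ) by ring, abs_neg, abs_of_nonneg (by linarith)]
    calc dist (γ (L/2)) (g ^ j • γ (L/2))
        ≤ dist (γ (L/2)) (γ (L - s)) + dist (γ (L - s)) (g ^ j • γ s)
            + dist (g ^ j • γ s) (g ^ j • γ (L/2)) := dist_triangle4 _ _ _ _
      _ ≤ 6 * δ + 2 * δ + 6 * δ := by rw [e1, e2]; linarith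
      _ ≤ 24 * δ := by linarith

lemma flip_param (hδ : 0 < δ) (hgeo : GeodesicSpace S) (hthin : Thin δ S)
    (hiso : IsIsometricAction G S) (hdia : Diamond g S δ) (j : ℤ) {y : S} {γ : ℝ → S}
    (hγ : IsGeodesicParam γ y (g ^ j • y)) {s : ℝ}
    (hmem : s ∈ Set.Icc (0:ℝ) (dist y (g ^ j • y))) {B : ℝ}
    (hB : dist (γ s) (g ^ j • γ s) ≤ B) :
    |dist y (g ^ j • y) - 2 * s| ≤ B + 14 * δ := by
  set L := dist y (g ^ j • y) with hL
  have hB0 : 0 ≤ B := le_trans dist_nonneg hB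
  rcases le_or_gt s (L / 2 - 6 * δ) with hc1 | hc1
  · -- first case: flip directly
    have hkey := flip1 hδ hgeo hthin hiso hdia j hγ hmem.1 hc1
    have hmem2 : L - s ∈ Set.Icc (0:ℝ) L := ⟨by linarith [hmem.2], by linarith [hmem.1]⟩
    have e1 : dist (γ s) (γ (L - s)) = |L - 2 * s| := by
      rw [hγ.2.2 _ hmem _ hmem2, show s - (L - s) = -(L - 2*s) by ring, abs_neg]
    have : dist (γ s) (γ (L - s)) ≤ B + 2 * δ := by
      calc dist (γ s) (γ (L - s)) ≤ dist (γ s) (g ^ j • γ s) + dist (g ^ j • γ s) (γ (L - s)) :=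
            dist_triangle _ _ _
        _ ≤ B + 2 * δ := by rw [dist_comm (g ^ j • γ s) (γ (L-s))] at *; linarith [hkey]
    rw [e1] at this; linarith
  rcases le_or_gt (L / 2 + 6 * δ) s with hc2 | hc2
  · -- third case: flip with the inverse element on the reversed geodesic
    set y' := g ^ j • y with hy'
    have hyy : g ^ (-j) • y' = y := by
      rw [hy', ← mul_smul, ← zpow_add]
      norm_num
    have hrev0 : IsGeodesicParam (fun t => γ (L - t)) y' y := geod_reverse hγ
    have hrev : IsGeodesicParam (fun t => γ (L - t)) y' (g ^ (-j) • y') := by rwa [hyy]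
    have hL' : dist y' (g ^ (-j) • y') = L := by rw [hyy, dist_comm]
    have hs0' : (0:ℝ) ≤ L - s := by linarith [hmem.2]
    have hs1' : L - s ≤ dist y' (g ^ (-j) • y') / 2 - 6 * δ := by rw [hL']; linarith
    have hkey := flip1 hδ hgeo hthin hiso hdia (-j) hrev hs0' hs1'
    -- hkey : dist (γ (L - (dist y' (g^(-j) y') - (L - s)))) (g^(-j) • γ (L - (L - s))) ≤ 2δ
    rw [hL'] at hkey
    have e0 : L - (L - (L - s)) = L - s := by ring
    rw [e0, show L - (L - s) = s by ring] at hkey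
    -- hkey : dist (γ (L - s)) (g ^ (-j) • γ s) ≤ 2 * δ
    have e2 : dist (γ s) (g ^ (-j) • γ s) ≤ B := by
      have : dist (γ s) (g ^ (-j) • γ s) = dist (g ^ j • γ s) (γ s) := by
        rw [← hiso (g ^ j) (γ s) (g ^ (-j) • γ s), ← mul_smul, ← zpow_add]
        norm_num
      rw [this, dist_comm]; exact hB
    have hmem2 : L - s ∈ Set.Icc (0:ℝ) L := ⟨by linarith [hmem.2], by linarith [hmem.1]⟩
    have e1 : dist (γ s) (γ (L - s)) = |L - 2 * s| := by
      rw [hγ.2.2 _ hmem _ hmem2, show s - (L - s) = -(L - 2*s) by ring, abs_neg]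
    have : dist (γ s) (γ (L - s)) ≤ B + 2 * δ := by
      calc dist (γ s) (γ (L - s))
          ≤ dist (γ s) (g ^ (-j) • γ s) + dist (g ^ (-j) • γ s) (γ (L - s)) := dist_triangle _ _ _
        _ ≤ B + 2 * δ := by rw [dist_comm (g ^ (-j) • γ s) (γ (L - s))]; linarith [hkey]
    rw [e1] at this; linarith
  · -- middle case
    rw [abs_le]; constructor <;> linarith

end Dia
end AAH

namespace AAH
section ClaimA

variable {G : Type*} [Group G] {S : Type*} [MetricSpace S] [MulAction G S] {δ : ℝ} {g : G}

lemma zpow_smul_comm (g : G) (a b : ℤ) (x : S) : g ^ a • g ^ b • x = g ^ b • g ^ a • x := by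
  rw [← mul_smul, ← mul_smul, ← zpow_add, ← zpow_add, add_comm]

lemma claimA (hδ : 0 < δ) (hgeo : GeodesicSpace S) (hthin : Thin δ S)
    (hiso : IsIsometricAction G S) (hdia : Diamond g S δ) (x : S) (m k : ℤ)
    {γ : ℝ → S} (hγ : IsGeodesicParam γ x (g ^ m • x))
    (hk : dist x (g ^ k • x) ≤ dist x (g ^ m • x) / 4 - 10 * δ) :
    dist (γ (dist x (g ^ m • x) / 2)) (g ^ k • γ (dist x (g ^ m • x) / 2)) ≤ 30 * δ := by
  set D := dist x (g ^ m • x) with hD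
  set dk := dist x (g ^ k • x) with hdk
  have hdk0 : 0 ≤ dk := dist_nonneg
  have hD40 : 40 * δ ≤ D := by linarith
  have hmemz : D / 2 ∈ Set.Icc (0:ℝ) D := ⟨by linarith, by linarith⟩
  set z := γ (D / 2) with hz
  set p := g ^ k • z with hp
  have hxz : dist x z = D / 2 := geod_dist0 hγ hmemz
  have hpgk : dist (g ^ k • x) p = D / 2 := by rw [hp, hiso]; exact hxz
  -- the translated geodesic γ' from g^k x to g^k g^m x
  have hγ' : IsGeodesicParam (fun t => g ^ k • γ t) (g ^ k • x) (g ^ k • g ^ m • x) :=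
    geod_smul hiso (g ^ k) hγ
  have hdγ' : dist (g ^ k • x) (g ^ k • g ^ m • x) = D := by rw [hiso]
  -- geodesic from x to g^k x
  obtain ⟨γk, hγk⟩ := hgeo x (g ^ k • x)
  -- geodesic from x to g^k g^m x
  obtain ⟨β, hβ⟩ := hgeo x (g ^ k • g ^ m • x)
  -- p is far from x and from g^m x
  have hpx : D / 2 - dk ≤ dist p x := by
    have h2 := dist_triangle p x (g ^ k • x)
    rw [dist_comm p (g ^ k • x), hpgk, ← hdk] at h2
    linarith
  have hpgm : D / 2 - dk ≤ dist p (g ^ m • x) := by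
    have h1 := dist_triangle x (g ^ k • x) (g ^ m • x)
    rw [← hD, ← hdk] at h1
    have h2 := dist_triangle (g ^ k • x) p (g ^ m • x)
    rw [hpgk] at h2
    linarith
  -- triangle 1 : vertices g^k x, g^k g^m x, x
  obtain ⟨thin1, _, _⟩ := hthin (g ^ k • x) (g ^ k • g ^ m • x) x
    (fun t => g ^ k • γ t) (fun t => β (dist x (g ^ k • g ^ m • x) - t))
    (fun t => γk (dist x (g ^ k • x) - t)) hγ' (geod_reverse hβ) (geod_reverse hγk)
  have hpmem : p ∈ geodSide (fun t => g ^ k • γ t) (g ^ k • x) (g ^ k • g ^ m • x) := by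
    have : p = (fun t => g ^ k • γ t) (D / 2) := rfl
    rw [this]
    apply geod_mem hγ'
    rw [hdγ']
    exact hmemz
  obtain ⟨q₁, hq₁, hdq₁⟩ := thin1 p hpmem
  rw [geodSide_reverse hβ, geodSide_reverse hγk] at hq₁
  have hq₁β : q₁ ∈ geodSide β x (g ^ k • g ^ m • x) := by
    rcases hq₁ with hq | hq
    · exact hq
    · exfalso
      have h1 : dist x q₁ ≤ dk := by
        have := side_dist_left_le hγk hq
        rw [← hdk] at this; exact this
      have h2 : dist p x ≤ dist p q₁ + dist q₁ x := dist_triangle _ _ _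
      rw [dist_comm q₁ x] at h2
      linarith [hpx, hdq₁, h2, hδ]
  -- triangle 2 : vertices x, g^m x, g^k g^m x
  have hγmk : IsGeodesicParam (fun t => g ^ m • γk t) (g ^ m • x) (g ^ k • g ^ m • x) := by
    have := geod_smul hiso (g ^ m) hγk
    rwa [zpow_smul_comm g m k x] at this
  obtain ⟨_, _, thin3⟩ := hthin x (g ^ m • x) (g ^ k • g ^ m • x)
    γ (fun t => g ^ m • γk t) β hγ hγmk hβ
  obtain ⟨w, hw, hdw⟩ := thin3 q₁ hq₁β
  have hww : w ∈ geodSide γ x (g ^ m • x) := by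
    rcases hw with hw | hw
    · exact hw
    · exfalso
      have h1 : dist (g ^ m • x) w ≤ dk := by
        have h0 := side_dist_left_le hγmk hw
        have e : dist (g ^ m • x) (g ^ k • g ^ m • x) = dk := by
          rw [zpow_smul_comm g k m x, hiso, ← hdk]
        rwa [e] at h0
      have h2 : dist p (g ^ m • x) ≤ dist p q₁ + dist q₁ w + dist w (g ^ m • x) :=
        dist_triangle4 _ _ _ _
      rw [dist_comm w (g ^ m • x)] at h2
      linarith [hpgm, hdq₁, hdw, h2, hδ]
  have hdpw : dist p w ≤ 2 * δ := by
    calc dist p w ≤ dist p q₁ + dist q₁ w := dist_triangle _ _ _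
      _ ≤ 2 * δ := by linarith
  obtain ⟨s, hs, hws, hxw, _⟩ := side_exists_param hγ hww
  -- p moves little under g^m
  have hmid : dist p (g ^ m • p) ≤ 24 * δ := by
    have hγ'' : IsGeodesicParam (fun t => g ^ k • γ t) (g ^ k • x) (g ^ m • g ^ k • x) := by
      rwa [zpow_smul_comm g m k x]
    have hL : dist (g ^ k • x) (g ^ m • g ^ k • x) = D := by
      rw [zpow_smul_comm g m k x, hiso]
    have := midpoint_moved hδ hgeo hthin hiso hdia m hγ''
    rw [hL] at this
    exact this
  -- w moves little under g^m
  have hwmoved : dist w (g ^ m • w) ≤ 28 * δ := by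
    have h1 : dist (g ^ m • p) (g ^ m • w) = dist p w := hiso _ _ _
    calc dist w (g ^ m • w) ≤ dist w p + dist p (g ^ m • p) + dist (g ^ m • p) (g ^ m • w) :=
          dist_triangle4 _ _ _ _
      _ ≤ 2 * δ + 24 * δ + 2 * δ := by
          rw [h1, dist_comm w p]
          linarith
      _ ≤ 28 * δ := by linarith
  -- flip: s is close to D/2
  have hflip : |D - 2 * s| ≤ 42 * δ := by
    have : dist (γ s) (g ^ m • γ s) ≤ 28 * δ := by rw [hws]; exact hwmoved
    have h2 := flip_param hδ hgeo hthin hiso hdia m hγ hs this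
    rw [← hD] at h2
    linarith
  -- conclude
  have hzw : dist z w = |D / 2 - s| := by
    rw [← hws, hz, hγ.2.2 _ hmemz _ hs]
  have : dist z p ≤ |D / 2 - s| + 2 * δ := by
    calc dist z p ≤ dist z w + dist w p := dist_triangle _ _ _
      _ ≤ |D / 2 - s| + 2 * δ := by rw [hzw, dist_comm w p]; linarith
  have habs : |D / 2 - s| ≤ 21 * δ := by
    rw [abs_le] at hflip ⊢
    constructor <;> linarith [hflip.1, hflip.2]
  calc dist z (g ^ k • z) = dist z p := rfl
    _ ≤ 30 * δ := by linarith

end ClaimA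
end AAH

namespace AAH

open Filter Topology Bornology Set

section Final

variable {G : Type*} [Group G] {S : Type*} [MetricSpace S] [MulAction G S] {δ : ℝ} {g : G}

/-- displacement sequence -/
noncomputable def u (g : G) (s : S) : ℕ → ℝ := fun n => dist s (g ^ (n : ℤ) • s)

lemma dist_zpow_neg (hiso : IsIsometricAction G S) (n : ℤ) (s : S) :
    dist s (g ^ (-n) • s) = dist s (g ^ n • s) := by
  have h := hiso (g ^ n) s (g ^ (-n) • s)
  rw [← mul_smul, ← zpow_add, add_neg_cancel, zpow_zero, one_smul] at h
  rw [← h, dist_comm]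

lemma dist_zpow_natAbs (hiso : IsIsometricAction G S) (a : ℤ) (s : S) :
    dist s (g ^ a • s) = u g s a.natAbs := by
  unfold u
  rcases Int.natAbs_eq a with h | h
  · rw [← h]
  · rw [← Int.natAbs_neg, show (-a).natAbs = (-a).natAbs from rfl]
    rw [Int.natAbs_neg]
    nth_rewrite 1 [h]
    exact dist_zpow_neg hiso _ s

lemma u_subadd (hiso : IsIsometricAction G S) (s : S) : Subadditive (u g s) := by
  intro m n
  unfold u
  have h1 : (g : G) ^ ((m + n : ℕ) : ℤ) • s = g ^ (m : ℤ) • g ^ (n : ℤ) • s := by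
    rw [← mul_smul, ← zpow_add]
    norm_num
  rw [h1]
  calc dist s (g ^ (m:ℤ) • g ^ (n:ℤ) • s)
      ≤ dist s (g ^ (m:ℤ) • s) + dist (g ^ (m:ℤ) • s) (g ^ (m:ℤ) • g ^ (n:ℤ) • s) :=
        dist_triangle _ _ _
    _ = dist s (g ^ (m:ℤ) • s) + dist s (g ^ (n:ℤ) • s) := by rw [hiso]

lemma u_bddBelow (s : S) : BddBelow (Set.range fun n => u g s n / n) := by
  refine ⟨0, ?_⟩
  rintro _ ⟨n, rfl⟩
  have : 0 ≤ u g s n := dist_nonneg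
  positivity

lemma u_tendsto (hiso : IsIsometricAction G S) (s : S) :
    Tendsto (fun n => u g s n / n) atTop (𝓝 ((u_subadd (g := g) hiso s).lim)) :=
  (u_subadd hiso s).tendsto_lim (u_bddBelow s)

lemma u_close (hiso : IsIsometricAction G S) (s y : S) (n : ℕ) :
    |u g y n - u g s n| ≤ 2 * dist s y := by
  have h1 : u g y n ≤ u g s n + 2 * dist s y := by
    unfold u
    calc dist y (g ^ (n:ℤ) • y)
        ≤ dist y s + dist s (g ^ (n:ℤ) • s) + dist (g ^ (n:ℤ) • s) (g ^ (n:ℤ) • y) :=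
          dist_triangle4 _ _ _ _
      _ = dist s (g ^ (n:ℤ) • s) + 2 * dist s y := by rw [hiso, dist_comm y s]; ring
      _ = u g s n + 2 * dist s y := rfl
  have h2 : u g s n ≤ u g y n + 2 * dist s y := by
    unfold u
    calc dist s (g ^ (n:ℤ) • s)
        ≤ dist s y + dist y (g ^ (n:ℤ) • y) + dist (g ^ (n:ℤ) • y) (g ^ (n:ℤ) • s) :=
          dist_triangle4 _ _ _ _
      _ = dist y (g ^ (n:ℤ) • y) + 2 * dist s y := by rw [hiso, dist_comm y s]; ring
      _ = u g y n + 2 * dist s y := rfl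
  rw [abs_le]
  constructor <;> linarith

lemma u_tendsto' (hiso : IsIsometricAction G S) (s y : S) :
    Tendsto (fun n => u g s n / n) atTop (𝓝 ((u_subadd (g := g) hiso y).lim)) := by
  apply (u_tendsto hiso y).congr_dist
  apply squeeze_zero (fun n => dist_nonneg) (g := fun n : ℕ => (2 * dist s y) / n)
  · intro n
    rcases Nat.eq_zero_or_pos n with hn | hn
    · subst hn; simp
    · rw [Real.dist_eq]
      have : u g y n / n - u g s n / n = (u g y n - u g s n) / n := by ring
      rw [this, abs_div, abs_of_nonneg (by positivity : (0:ℝ) ≤ (n:ℝ))]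
      have hn' : (0:ℝ) < (n:ℝ) := by exact_mod_cast hn
      exact (div_le_div_iff_of_pos_right hn').mpr (u_close hiso s y n)
  · exact tendsto_const_div_atTop_nhds_zero_nat _

lemma lim_eq (hiso : IsIsometricAction G S) (s y : S) :
    (u_subadd (g := g) hiso s).lim = (u_subadd (g := g) hiso y).lim :=
  tendsto_nhds_unique (u_tendsto hiso s) (u_tendsto' hiso s y)

/-- If the Diamond condition fails, `g` is loxodromic. -/
lemma lox_of_violation (hδ : 0 < δ) (hgeo : GeodesicSpace S) (hthin : Thin δ S)
    (hiso : IsIsometricAction G S) (hviol : ¬ Diamond g S δ) : IsLoxodromic S g := by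
  unfold Diamond at hviol
  push_neg at hviol
  obtain ⟨y, j, hyj⟩ := hviol
  have hj0 : j ≠ 0 := by
    intro h
    subst h
    simp only [mul_zero, zpow_zero, one_smul, dist_self] at hyj
    linarith
  -- apply the broken-path lemma with h = g^j
  have hcond : dist y (g ^ j • y) + 6 * δ < dist y (g ^ j • g ^ j • y) := by
    rw [← two_smul_eq]; linarith
  have hgrow := broken hδ hgeo hthin hiso hcond
  set θ := dist y (g ^ j • g ^ j • y) - dist y (g ^ j • y) - 6 * δ with hθ
  have hθpos : 0 < θ := by rw [hθ]; linarith
  set J := j.natAbs with hJ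
  have hJ1 : 1 ≤ J := Int.natAbs_pos.mpr hj0
  -- u y (n * J) ≥ n θ
  have hkey : ∀ n : ℕ, 1 ≤ n → (n : ℝ) * θ ≤ u g y (n * J) := by
    intro n hn
    have h1 := hgrow n hn
    have h2 : (g ^ j) ^ n • y = g ^ (j * (n:ℤ)) • y := by
      rw [← zpow_natCast (g ^ j) n, ← zpow_mul]
    rw [h2] at h1
    have h3 : dist y (g ^ (j * (n:ℤ)) • y) = u g y ((j * (n:ℤ)).natAbs) :=
      dist_zpow_natAbs hiso _ y
    have h4 : (j * (n:ℤ)).natAbs = n * J := by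
      rw [Int.natAbs_mul, Int.natAbs_natCast, mul_comm]
    rw [h3, h4] at h1
    exact h1
  -- the limit at y is at least θ / J
  have hτ : θ / J ≤ (u_subadd (g := g) hiso y).lim := by
    have hmono : Tendsto (fun n : ℕ => n * J) atTop atTop := by
      apply tendsto_atTop_mono (fun n => Nat.le_mul_of_pos_right n (by omega)) tendsto_id
    have hcomp : Tendsto (fun n : ℕ => u g y (n * J) / ((n * J : ℕ) : ℝ)) atTop
        (𝓝 ((u_subadd (g := g) hiso y).lim)) :=
      (u_tendsto (g := g) hiso y).comp hmono
    apply ge_of_tendsto hcomp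
    filter_upwards [eventually_ge_atTop 1] with n hn
    have h1 := hkey n hn
    have hJpos : (0:ℝ) < (J:ℝ) := by exact_mod_cast hJ1
    have hnJ : (0:ℝ) < ((n * J : ℕ) : ℝ) := by
      have : 0 < n * J := Nat.mul_pos (by omega) (by omega)
      exact_mod_cast this
    rw [div_le_div_iff₀ hJpos hnJ]
    push_cast at h1 ⊢
    nlinarith [h1]
  have hτpos : 0 < (u_subadd (g := g) hiso y).lim := by
    have : 0 < θ / J := by positivity
    linarith
  -- conclude loxodromicity
  intro s
  refine ⟨(u_subadd (g := g) hiso y).lim, hτpos, ?_⟩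
  intro n
  have habs : |(n : ℝ)| = (n.natAbs : ℝ) := by
    rw [← Int.cast_abs, ← Int.natCast_natAbs]; exact Int.cast_natCast _
  rw [habs, dist_zpow_natAbs hiso n s]
  rcases Nat.eq_zero_or_pos n.natAbs with h0 | h0
  · rw [h0, Nat.cast_zero, mul_zero]
    unfold u
    exact dist_nonneg
  · have hle := (u_subadd (g := g) hiso s).lim_le_div (u_bddBelow s) (n := n.natAbs) (by omega)
    rw [lim_eq hiso y s]
    rw [le_div_iff₀ (by exact_mod_cast h0)] at hle
    linarith

end Final
end AAH

namespace AAH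

open Filter Topology Bornology Set Metric

section Final2

variable {G : Type*} [Group G] {S : Type*} [MetricSpace S] [MulAction G S] {δ : ℝ} {g : G}

lemma elliptic_of_bounded (hiso : IsIsometricAction G S) {s₀ : S}
    (hb : IsBounded (Set.range fun n : ℤ => g ^ n • s₀)) : IsElliptic S g := by
  intro s
  obtain ⟨r, hr⟩ := (isBounded_iff_subset_closedBall s₀).mp hb
  rw [isBounded_iff_subset_closedBall s₀]
  refine ⟨dist s s₀ + r, ?_⟩
  rintro _ ⟨n, rfl⟩
  have h1 : g ^ n • s₀ ∈ Metric.closedBall s₀ r := hr ⟨n, rfl⟩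
  rw [Metric.mem_closedBall] at h1 ⊢
  calc dist (g ^ n • s) s₀ ≤ dist (g ^ n • s) (g ^ n • s₀) + dist (g ^ n • s₀) s₀ :=
        dist_triangle _ _ _
    _ ≤ dist s s₀ + r := by rw [hiso]; linarith

lemma unbounded_exists (hiso : IsIsometricAction G S) {x : S}
    (hub : ¬ IsBounded (Set.range fun n : ℤ => g ^ n • x)) :
    ∀ r : ℝ, ∃ n : ℕ, r < u g x n := by
  intro r
  by_contra hcon
  push_neg at hcon
  apply hub
  rw [isBounded_iff_subset_closedBall x]
  refine ⟨r, ?_⟩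
  rintro _ ⟨n, rfl⟩
  rw [Metric.mem_closedBall, dist_comm]
  have h := hcon n.natAbs
  rw [← dist_zpow_natAbs hiso n x] at h
  exact h

lemma pow_injective_of_unbounded {x : S}
    (hub : ¬ IsBounded (Set.range fun n : ℤ => g ^ n • x)) :
    ∀ a b : ℕ, g ^ (a : ℤ) = g ^ (b : ℤ) → a = b := by
  intro a b hab
  by_contra hne
  apply hub
  set c : ℤ := (a : ℤ) - b with hcdef
  have hc0 : c ≠ 0 := by
    simp only [hcdef]
    omega
  have hc : g ^ c = 1 := by
    rw [hcdef, zpow_sub, hab, mul_inv_cancel]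
  have hcpos : 0 < (c.natAbs : ℤ) := by
    have := Int.natAbs_pos.mpr hc0
    exact_mod_cast this
  have hone : g ^ ((c.natAbs : ℤ)) = 1 := by
    rcases Int.natAbs_eq c with h | h
    · rw [← h, hc]
    · have he : ((c.natAbs : ℤ)) = -c := by omega
      rw [he, zpow_neg, hc, inv_one]
  have hsub : (Set.range fun n : ℤ => g ^ n • x)
      ⊆ (fun r : ℤ => g ^ r • x) '' (Set.Ico (0 : ℤ) (c.natAbs : ℤ)) := by
    rintro _ ⟨n, rfl⟩
    refine ⟨n % (c.natAbs : ℤ),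
      ⟨Int.emod_nonneg n (by omega), Int.emod_lt_of_pos n hcpos⟩, ?_⟩
    have hsplit : g ^ n = g ^ ((c.natAbs : ℤ) * (n / (c.natAbs : ℤ))) * g ^ (n % (c.natAbs : ℤ)) := by
      rw [← zpow_add, Int.mul_ediv_add_emod n (c.natAbs : ℤ)]
    simp only []
    rw [hsplit, zpow_mul, hone, one_zpow, one_mul]
  exact ((Set.finite_Ico _ _).image _).isBounded.subset hsub

lemma no_diamond (hδ : 0 < δ) (hgeo : GeodesicSpace S) (hthin : Thin δ S)
    (hiso : IsIsometricAction G S) (hacyl : AcylindricalAction G S) (hdia : Diamond g S δ)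
    (x : S) (hub : ¬ IsBounded (Set.range fun n : ℤ => g ^ n • x)) : False := by
  classical
  obtain ⟨R, N, hR, hN, hcount⟩ := hacyl (30 * δ) (by positivity)
  have hbig := unbounded_exists hiso hub
  obtain ⟨M, hM'⟩ := Finset.exists_le ((Finset.range (N + 1)).image (u g x))
  have hM : ∀ k : ℕ, k ≤ N → u g x k ≤ M := by
    intro k hk
    exact hM' _ (Finset.mem_image_of_mem _ (Finset.mem_range.mpr (by omega)))
  have hM0 : 0 ≤ M := by
    refine le_trans ?_ (hM 0 (by omega))
    unfold u
    exact dist_nonneg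
  obtain ⟨m, hm⟩ := hbig (4 * M + 40 * δ)
  obtain ⟨m', hm'⟩ := hbig (u g x m + 2 * R)
  have hudef : ∀ (y : S) (n : ℕ), u g y n = dist y (g ^ (n : ℤ) • y) := fun _ _ => rfl
  obtain ⟨γ, hγ⟩ := hgeo x (g ^ (m : ℤ) • x)
  obtain ⟨γ', hγ'⟩ := hgeo x (g ^ (m' : ℤ) • x)
  set z := γ (dist x (g ^ (m : ℤ) • x) / 2) with hzdef
  set z' := γ' (dist x (g ^ (m' : ℤ) • x) / 2) with hz'def
  have hum : 4 * M + 40 * δ < u g x m := hm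
  have hum' : u g x m + 2 * R < u g x m' := hm'
  have hDm0 : (0:ℝ) ≤ dist x (g ^ (m:ℤ) • x) := dist_nonneg
  have hDm'0 : (0:ℝ) ≤ dist x (g ^ (m':ℤ) • x) := dist_nonneg
  rw [hudef] at hum hum'
  rw [hudef] at hum'
  have hz : dist x z = dist x (g ^ (m:ℤ) • x) / 2 :=
    geod_dist0 hγ ⟨by linarith, by linarith⟩
  have hz' : dist x z' = dist x (g ^ (m':ℤ) • x) / 2 :=
    geod_dist0 hγ' ⟨by linarith, by linarith⟩
  have hdzz' : R ≤ dist z z' := by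
    have htri : dist x z' ≤ dist x z + dist z z' := dist_triangle _ _ _
    rw [hz, hz'] at htri
    linarith
  have hclaim : ∀ k : ℕ, k ≤ N →
      dist z (g ^ (k : ℤ) • z) ≤ 30 * δ ∧ dist z' (g ^ (k : ℤ) • z') ≤ 30 * δ := by
    intro k hk
    have huk := hM k hk
    rw [hudef] at huk
    constructor
    · apply claimA hδ hgeo hthin hiso hdia x (m : ℤ) (k : ℤ) hγ
      linarith
    · apply claimA hδ hgeo hthin hiso hdia x (m' : ℤ) (k : ℤ) hγ'
      linarith
  have hE := hcount z z' hdzz'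
  set F : Finset G := (Finset.range (N + 1)).image (fun k : ℕ => g ^ (k : ℤ)) with hF
  have hcard : F.card = N + 1 := by
    rw [hF, Finset.card_image_of_injOn, Finset.card_range]
    intro a _ b _ hab
    exact pow_injective_of_unbounded hub a b hab
  have hFE : (F : Set G) ⊆ {h : G | dist z (h • z) ≤ 30 * δ ∧ dist z' (h • z') ≤ 30 * δ} := by
    intro h hh
    rw [Finset.mem_coe, hF, Finset.mem_image] at hh
    obtain ⟨k, hk, rfl⟩ := hh
    exact hclaim k (by simp at hk; omega)
  have hfinal : ((N + 1 : ℕ) : ℕ∞) ≤ ((N : ℕ) : ℕ∞) := by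
    calc ((N + 1 : ℕ) : ℕ∞) = (F : Set G).encard := by
          rw [Set.encard_coe_eq_coe_finsetCard, hcard]
      _ ≤ Set.encard {h : G | dist z (h • z) ≤ 30 * δ ∧ dist z' (h • z') ≤ 30 * δ} :=
          Set.encard_mono hFE
      _ ≤ ((N : ℕ) : ℕ∞) := hE
  have : N + 1 ≤ N := Nat.cast_le.mp hfinal
  omega

end Final2
end AAH


/-- Let `G` be a group acting acylindrically by isometries on a hyperbolic geodesic
metric space `S`. Then every element of `G` is either elliptic or loxodromic. -/
theorem statement_1 {G : Type*} [Group G] {S : Type*} [MetricSpace S] [MulAction G S]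
    (hiso : IsIsometricAction G S) (hhyp : HyperbolicSpace S)
    (hacyl : AcylindricalAction G S) (g : G) :
    IsElliptic S g ∨ IsLoxodromic S g := by
  obtain ⟨hgeo, δ₀, hδ₀, hthin₀⟩ := hhyp
  have hthinA : AAH.Thin δ₀ S := hthin₀
  have hthin : AAH.Thin (δ₀ + 1) S := hthinA.mono (by linarith)
  have hδ : (0 : ℝ) < δ₀ + 1 := by linarith
  by_cases hE : ∃ s₀ : S, Bornology.IsBounded (Set.range fun n : ℤ => g ^ n • s₀)
  · left
    obtain ⟨s₀, hb⟩ := hE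
    exact AAH.elliptic_of_bounded hiso hb
  · right
    push_neg at hE
    by_cases hdia : AAH.Diamond g S (δ₀ + 1)
    · intro s
      exact (AAH.no_diamond hδ hgeo hthin hiso hacyl hdia s (hE s)).elim
    · exact AAH.lox_of_violation hδ hgeo hthin hiso hdia
end

section
/- Every acylindrically hyperbolic group G contains a finite normal subgroup K(G) that contains every finite normal subgroup of G; in particular, K(G) is the unique maximal finite normal subgroup of G. -/
/-- Two `1`-quasi-centers of a set `Y` in a `δ`-hyperbolic geodesic space are at
distance at most `4δ + 2`. -/
lemma centers_close {S : Type*} [MetricSpace S] {δ : ℝ} (hδ : 0 ≤ δ)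
    (hgeo : GeodesicSpace S)
    (hthin : ∀ (x y z : S) (γ₁ γ₂ γ₃ : ℝ → S),
      IsGeodesicParam γ₁ x y → IsGeodesicParam γ₂ y z → IsGeodesicParam γ₃ x z →
        SideThin δ (geodSide γ₁ x y) (geodSide γ₂ y z) (geodSide γ₃ x z))
    (Y : Set S) (r : ℝ)
    (hr : ∀ t : ℝ, (∃ m : S, ∀ y ∈ Y, dist m y ≤ t) → r ≤ t)
    (x x' : S) (hx : ∀ y ∈ Y, dist x y ≤ r + 1) (hx' : ∀ y ∈ Y, dist x' y ≤ r + 1) :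
    dist x x' ≤ 4 * δ + 2 := by
  by_contra hcon
  push_neg at hcon
  set d : ℝ := dist x x' with hd
  have hd0 : 0 < d := by linarith
  obtain ⟨γ₁, h10, h1d, h1iso⟩ := hgeo x x'
  have hmem : d / 2 ∈ Set.Icc (0 : ℝ) d := ⟨by linarith, by linarith⟩
  have hmem0 : (0 : ℝ) ∈ Set.Icc (0 : ℝ) d := ⟨le_refl _, by linarith⟩
  have hmemd : d ∈ Set.Icc (0 : ℝ) d := ⟨by linarith, le_refl _⟩
  set m : S := γ₁ (d / 2) with hm
  have dxm : dist x m = d / 2 := by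
    rw [hm, ← h10, h1iso 0 hmem0 (d / 2) hmem]
    rw [abs_of_nonpos (by linarith)]; ring
  have dx'm : dist x' m = d / 2 := by
    rw [hm, ← h1d, h1iso d hmemd (d / 2) hmem]
    rw [abs_of_nonneg (by linarith)]; ring
  have hkey : ∀ y ∈ Y, dist m y ≤ r + 1 + 2 * δ - d / 2 := by
    intro y hy
    obtain ⟨γ₂, h20, h2d, h2iso⟩ := hgeo x' y
    obtain ⟨γ₃, h30, h3d, h3iso⟩ := hgeo x y
    have hsthin := hthin x x' y γ₁ γ₂ γ₃ ⟨h10, h1d, h1iso⟩ ⟨h20, h2d, h2iso⟩ ⟨h30, h3d, h3iso⟩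
    obtain ⟨q, hq, hmq⟩ := hsthin m ⟨d / 2, hmem, rfl⟩
    rcases hq with hq | hq
    · -- q on the side from x' to y
      obtain ⟨t, ht, rfl⟩ := hq
      have hx'q : dist x' (γ₂ t) = t := by
        have h := h2iso 0 ⟨le_refl _, dist_nonneg⟩ t ht
        rw [h20] at h
        rw [h, abs_of_nonpos (by linarith [ht.1])]; ring
      have hqy : dist (γ₂ t) y = dist x' y - t := by
        have h := h2iso t ht (dist x' y) ⟨dist_nonneg, le_refl _⟩
        rw [h2d] at h
        rw [h, abs_of_nonpos (by linarith [ht.2])]; ring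
      have h1 : d / 2 ≤ t + δ := by
        calc d / 2 = dist x' m := dx'm.symm
        _ ≤ dist x' (γ₂ t) + dist (γ₂ t) m := dist_triangle _ _ _
        _ ≤ t + δ := by rw [hx'q]; linarith [dist_comm m (γ₂ t) ▸ hmq]
      have h2 : dist m y ≤ δ + (dist x' y - t) := by
        calc dist m y ≤ dist m (γ₂ t) + dist (γ₂ t) y := dist_triangle _ _ _
        _ ≤ δ + (dist x' y - t) := by rw [hqy]; linarith
      have := hx' y hy
      linarith
    · -- q on the side from x to y
      obtain ⟨t, ht, rfl⟩ := hq
      have hxq : dist x (γ₃ t) = t := by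
        have h := h3iso 0 ⟨le_refl _, dist_nonneg⟩ t ht
        rw [h30] at h
        rw [h, abs_of_nonpos (by linarith [ht.1])]; ring
      have hqy : dist (γ₃ t) y = dist x y - t := by
        have h := h3iso t ht (dist x y) ⟨dist_nonneg, le_refl _⟩
        rw [h3d] at h
        rw [h, abs_of_nonpos (by linarith [ht.2])]; ring
      have h1 : d / 2 ≤ t + δ := by
        calc d / 2 = dist x m := dxm.symm
        _ ≤ dist x (γ₃ t) + dist (γ₃ t) m := dist_triangle _ _ _
        _ ≤ t + δ := by rw [hxq]; linarith [dist_comm m (γ₃ t) ▸ hmq]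
      have h2 : dist m y ≤ δ + (dist x y - t) := by
        calc dist m y ≤ dist m (γ₃ t) + dist (γ₃ t) y := dist_triangle _ _ _
        _ ≤ δ + (dist x y - t) := by rw [hqy]; linarith
      have := hx y hy
      linarith
  have := hr (r + 1 + 2 * δ - d / 2) ⟨m, hkey⟩
  linarith

/-- Every acylindrically hyperbolic group `G` contains a finite normal subgroup `K`
containing every finite normal subgroup of `G`; in particular, `K` is the unique
maximal finite normal subgroup of `G`. -/
theorem statement_5 {G : Type*} [Group G] (h : AcylindricallyHyperbolic G) :
    ∃! K : Subgroup G, K.Normal ∧ (K : Set G).Finite ∧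
      ∀ N : Subgroup G, N.Normal → (N : Set G).Finite → N ≤ K := by
  obtain ⟨-, S, _instM, _instA, hiso, ⟨hgeo, δ, hδ, hthin⟩, hacyl, s₀, hs₀⟩ := h
  have hthin1 : ∀ (x y z : S) (γ₁ γ₂ γ₃ : ℝ → S),
      IsGeodesicParam γ₁ x y → IsGeodesicParam γ₂ y z → IsGeodesicParam γ₃ x z →
        SideThin δ (geodSide γ₁ x y) (geodSide γ₂ y z) (geodSide γ₃ x z) :=
    fun x y z γ₁ γ₂ γ₃ h1 h2 h3 => (hthin x y z γ₁ γ₂ γ₃ h1 h2 h3).1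
  set C : ℝ := 4 * δ + 2 with hC
  obtain ⟨R, Nb, hR, hNb, hac⟩ := hacyl C (by linarith)
  -- every finite normal subgroup has at most `Nb` elements
  have key : ∀ N : Subgroup G, N.Normal → (N : Set G).Finite →
      (N : Set G).encard ≤ (Nb : ℕ∞) := by
    intro N hNn hNf
    set Y : Set S := (fun a : G => a • s₀) '' (N : Set G) with hY
    have hYne : Y.Nonempty := ⟨s₀, 1, N.one_mem, one_smul G s₀⟩
    have hYfin : Y.Finite := hNf.image _
    set A : Set ℝ := {t : ℝ | ∃ m : S, ∀ y ∈ Y, dist m y ≤ t} with hA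
    have hAne : A.Nonempty := by
      obtain ⟨ρ, hρ⟩ := hYfin.isBounded.subset_closedBall s₀
      exact ⟨ρ, s₀, fun y hy => by
        have := hρ hy; rw [Metric.mem_closedBall] at this
        rw [dist_comm]; exact this⟩
    have hAbdd : BddBelow A := by
      refine ⟨0, fun t ht => ?_⟩
      obtain ⟨m, hmt⟩ := ht
      obtain ⟨y, hy⟩ := hYne
      exact le_trans dist_nonneg (hmt y hy)
    set r : ℝ := sInf A with hrdef
    have hr : ∀ t : ℝ, (∃ m : S, ∀ y ∈ Y, dist m y ≤ t) → r ≤ t :=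
      fun t ht => csInf_le hAbdd ht
    obtain ⟨t, htA, htlt⟩ := exists_lt_of_csInf_lt hAne (lt_add_one r)
    obtain ⟨x, hx⟩ := htA
    have hxc : ∀ y ∈ Y, dist x y ≤ r + 1 := fun y hy => le_trans (hx y hy) htlt.le
    -- every element of N takes a center to a center
    have hacenter : ∀ a ∈ (N : Set G), ∀ y ∈ Y, dist (a • x) y ≤ r + 1 := by
      intro a ha y hy
      obtain ⟨b, hb, rfl⟩ := hy
      have : dist (a • x) (b • s₀) = dist x ((a⁻¹ * b) • s₀) := by
        rw [← hiso a⁻¹, inv_smul_smul, ← mul_smul]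
      rw [this]
      exact hxc _ ⟨a⁻¹ * b, mul_mem (inv_mem ha) hb, rfl⟩
    have hmove : ∀ a ∈ (N : Set G), dist x (a • x) ≤ C :=
      fun a ha => centers_close hδ hgeo hthin1 Y r hr x (a • x) hxc (hacenter a ha)
    have hmove_all : ∀ (g : G), ∀ a ∈ (N : Set G), dist (g • x) (a • g • x) ≤ C := by
      intro g a ha
      have heq : dist (g • x) (a • g • x) = dist x ((g⁻¹ * (a * g)) • x) := by
        rw [← hiso g⁻¹, inv_smul_smul, ← mul_smul, ← mul_smul, mul_assoc]
      rw [heq]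
      have hmem : g⁻¹ * (a * g) ∈ N := by
        rw [← mul_assoc]
        have := hNn.conj_mem a ha g⁻¹
        rwa [inv_inv] at this
      exact hmove _ hmem
    -- find a far-away translate of x
    have hfar : ∃ g₀ : G, R ≤ dist x (g₀ • x) := by
      by_contra hcon
      push_neg at hcon
      apply hs₀
      apply (Metric.isBounded_closedBall (x := s₀) (r := dist s₀ x + R + dist x s₀)).subset
      rintro - ⟨g, rfl⟩
      rw [Metric.mem_closedBall]
      calc dist (g • s₀) s₀ ≤ dist (g • s₀) (g • x) + dist (g • x) x + dist x s₀ :=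
            dist_triangle4 _ _ _ _
      _ = dist s₀ x + dist (g • x) x + dist x s₀ := by rw [hiso]
      _ ≤ dist s₀ x + R + dist x s₀ := by
            have := (hcon g).le; rw [dist_comm (g • x) x]; linarith
    obtain ⟨g₀, hg₀⟩ := hfar
    calc (N : Set G).encard
        ≤ {g : G | dist x (g • x) ≤ C ∧ dist (g₀ • x) (g • g₀ • x) ≤ C}.encard := by
          apply Set.encard_mono
          intro a ha
          exact ⟨hmove a ha, hmove_all g₀ a ha⟩
      _ ≤ (Nb : ℕ∞) := hac x (g₀ • x) hg₀
  have keyn : ∀ N : Subgroup G, N.Normal → (N : Set G).Finite →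
      (N : Set G).ncard ≤ Nb := by
    intro N h1 h2
    exact (Set.encard_le_coe_iff_finite_ncard_le.mp (key N h1 h2)).2
  -- pick a finite normal subgroup of maximal cardinality
  set I : Set ℕ := (fun K : Subgroup G => (K : Set G).ncard) ''
    {K : Subgroup G | K.Normal ∧ (K : Set G).Finite} with hI
  have hIne : I.Nonempty := ⟨((⊥ : Subgroup G) : Set G).ncard, ⊥,
    ⟨inferInstance, by rw [Subgroup.coe_bot]; exact Set.finite_singleton 1⟩, rfl⟩
  have hIbdd : BddAbove I := by
    refine ⟨Nb, fun n hn => ?_⟩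
    obtain ⟨K, ⟨h1, h2⟩, rfl⟩ := hn
    exact keyn K h1 h2
  obtain ⟨K, ⟨hKn, hKf⟩, hKcard⟩ := Nat.sSup_mem hIne hIbdd
  have hKmax : ∀ N : Subgroup G, N.Normal → (N : Set G).Finite → N ≤ K := by
    intro N hNn hNf
    haveI := hNn; haveI := hKn
    have hMn : (N ⊔ K).Normal := Subgroup.sup_normal N K
    have hMf : ((N ⊔ K : Subgroup G) : Set G).Finite := by
      rw [Subgroup.mul_normal N K]
      exact hNf.mul hKf
    have hle : ((N ⊔ K : Subgroup G) : Set G).ncard ≤ (K : Set G).ncard := by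
      have h2 : (K : Set G).ncard = sSup I := hKcard
      rw [h2]
      exact le_csSup hIbdd ⟨N ⊔ K, ⟨hMn, hMf⟩, rfl⟩
    have hsub : (K : Set G) ⊆ ((N ⊔ K : Subgroup G) : Set G) :=
      SetLike.coe_subset_coe.mpr le_sup_right
    have heq : (K : Set G) = ((N ⊔ K : Subgroup G) : Set G) :=
      Set.eq_of_subset_of_ncard_le hsub hle hMf
    have : N ⊔ K = K := (SetLike.coe_injective heq.symm)
    exact le_trans le_sup_left this.le
  refine ⟨K, ⟨hKn, hKf, hKmax⟩, ?_⟩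
  rintro K' ⟨hK'n, hK'f, hK'max⟩
  exact le_antisymm (hKmax K' hK'n hK'f) (hK'max K hKn hKf)
end

section
/- Let K be a finite normal subgroup of a group G. Then G is acylindrically hyperbolic if and only if the quotient G/K is acylindrically hyperbolic. -/
lemma isCyclic_zpowers {G : Type*} [Group G] (g : G) : IsCyclic (Subgroup.zpowers g) := by
  constructor
  refine ⟨⟨g, Subgroup.mem_zpowers g⟩, ?_⟩
  rintro ⟨x, hx⟩
  obtain ⟨n, hn⟩ := Subgroup.mem_zpowers_iff.mp hx
  refine Subgroup.mem_zpowers_iff.mpr ⟨n, ?_⟩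
  ext
  simpa using hn

lemma vc_quotient_of_vc {G : Type*} [Group G] (K : Subgroup G) [K.Normal]
    (h : VirtuallyCyclic G) : VirtuallyCyclic (G ⧸ K) := by
  obtain ⟨H, hcyc, hfi⟩ := h
  refine ⟨H.map (QuotientGroup.mk' K), ?_, ?_⟩
  · exact isCyclic_of_surjective _ (MonoidHom.subgroupMap_surjective (QuotientGroup.mk' K) H)
  · constructor
    rw [Subgroup.index_map]
    have h1 : (H ⊔ (QuotientGroup.mk' K).ker).index ∣ H.index :=
      Subgroup.index_dvd_of_le le_sup_left
    have h2 : (QuotientGroup.mk' K).range.index = 1 := by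
      rw [MonoidHom.range_eq_top.mpr (QuotientGroup.mk'_surjective K)]
      exact Subgroup.index_top
    rw [h2, mul_one]
    intro h0
    exact hfi.index_ne_zero (Nat.eq_zero_of_zero_dvd (h0 ▸ h1))

lemma vc_of_quotient_vc {G : Type*} [Group G] (K : Subgroup G) [K.Normal]
    (hfin : (K : Set G).Finite) (h : VirtuallyCyclic (G ⧸ K)) : VirtuallyCyclic G := by
  obtain ⟨C, hCcyc, hCfi⟩ := h
  set H : Subgroup G := C.comap (QuotientGroup.mk' K) with hHdef
  have hHfi : H.index ≠ 0 := by
    rw [Subgroup.index_comap_of_surjective _ (QuotientGroup.mk'_surjective K)]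
    exact hCfi.index_ne_zero
  obtain ⟨⟨c, hcC⟩, hgen⟩ := hCcyc.exists_generator
  obtain ⟨g, hg⟩ := QuotientGroup.mk'_surjective K c
  have hgH : g ∈ H := by
    simp only [hHdef, Subgroup.mem_comap]
    rw [hg]; exact hcC
  set Z : Subgroup G := Subgroup.zpowers g with hZdef
  have hZH : Z ≤ H := by
    rw [hZdef, Subgroup.zpowers_le]; exact hgH
  -- every h ∈ H is κ * g^n with κ ∈ K
  have key : ∀ h : G, h ∈ H → ∃ n : ℤ, h * (g ^ n)⁻¹ ∈ K := by
    intro h hh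
    have : QuotientGroup.mk' K h ∈ C := hh
    obtain ⟨n, hn⟩ := hgen ⟨QuotientGroup.mk' K h, this⟩
    have hn' : (QuotientGroup.mk' K) (g ^ n) = (QuotientGroup.mk' K) h := by
      have := congrArg (Subtype.val) hn
      simp only [SubgroupClass.coe_zpow] at this
      rw [← this, map_zpow, hg]
    refine ⟨n, ?_⟩
    have : h⁻¹ * g ^ n ∈ K := by
      rwa [← QuotientGroup.eq, ← QuotientGroup.mk'_apply, ← QuotientGroup.mk'_apply, eq_comm]
    have h2 : (h⁻¹ * g ^ n)⁻¹ ∈ K := K.inv_mem this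
    have h3 : ((g ^ n)⁻¹ * h) ∈ K := by simpa using h2
    -- conjugate by g^n? h * (g^n)⁻¹ = g^n * ((g^n)⁻¹ * h) * (g^n)⁻¹
    have := Subgroup.Normal.conj_mem ‹K.Normal› _ h3 (g ^ n)
    simpa [mul_assoc] using this
  -- finite quotient H / Z'
  set Z' : Subgroup H := Z.subgroupOf H with hZ'def
  have hKfin : Finite (K : Set G) := hfin.to_subtype
  classical
  have hsurj : Function.Surjective
      (fun k : (K : Set G) => (if hk : (k : G) ∈ H then QuotientGroup.mk (⟨k, hk⟩ : H) else
        QuotientGroup.mk (1 : H) : H ⧸ Z')) := by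
    intro q
    obtain ⟨⟨h, hh⟩, rfl⟩ := QuotientGroup.mk_surjective q
    obtain ⟨n, hκ⟩ := key h hh
    have hκH : h * (g ^ n)⁻¹ ∈ H := H.mul_mem hh (H.inv_mem (Subgroup.zpow_mem H hgH n))
    refine ⟨⟨h * (g ^ n)⁻¹, hκ⟩, ?_⟩
    simp only [hκH, dif_pos]
    apply (QuotientGroup.eq).mpr
    simp only [hZ'def, Subgroup.mem_subgroupOf]
    have heq : ((((⟨h * (g ^ n)⁻¹, hκH⟩ : H))⁻¹ * (⟨h, hh⟩ : H) : H) : G) = g ^ n := by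
      push_cast
      group
    rw [heq]
    exact Subgroup.zpow_mem Z (Subgroup.mem_zpowers g) n
  have : Finite (H ⧸ Z') := Finite.of_surjective _ hsurj
  have hZ'fi : Z'.FiniteIndex := Subgroup.finiteIndex_of_finite_quotient
  refine ⟨Z, isCyclic_zpowers g, ⟨?_⟩⟩
  have hrel : Z.relIndex H * H.index = Z.index := Subgroup.relIndex_mul_index hZH
  have : Z.relIndex H ≠ 0 := hZ'fi.index_ne_zero
  rw [← hrel]
  exact Nat.mul_ne_zero this hHfi

-- auxiliary: encard of biUnion
lemma encard_biUnion_le' {α β : Type*} (s : Finset β) (f : β → Set α) :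
    (⋃ b ∈ s, f b).encard ≤ ∑ b ∈ s, (f b).encard := by
  classical
  induction s using Finset.induction with
  | empty => simp
  | @insert a s ha ih =>
    rw [Finset.set_biUnion_insert, Finset.sum_insert ha]
    exact le_trans (Set.encard_union_le _ _) (add_le_add le_rfl ih)

section Backward
variable {G : Type*} [Group G] (K : Subgroup G) [K.Normal]

lemma backward_space (hfin : (K : Set G).Finite) (T : Type) [mT : MetricSpace T]
    [act : MulAction (G ⧸ K) T]
    (hacyl : AcylindricalAction (G ⧸ K) T) (hunb : UnboundedOrbits (G ⧸ K) T)
    (hiso : IsIsometricAction (G ⧸ K) T) :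
    ∃ (_ : MulAction G T), IsIsometricAction G T ∧ AcylindricalAction G T ∧ UnboundedOrbits G T := by
  classical
  letI actG : MulAction G T := MulAction.compHom T (QuotientGroup.mk' K)
  have hsmul : ∀ (g : G) (t : T), g • t = (QuotientGroup.mk' K g) • t := fun g t => rfl
  refine ⟨actG, ?_, ?_, ?_⟩
  · intro g x y
    rw [hsmul, hsmul]
    exact hiso _ x y
  · intro ε hε
    obtain ⟨R, N, hR, hN, hbound⟩ := hacyl ε hε
    have hKcard : (hfin.toFinset).Nonempty := ⟨1, hfin.mem_toFinset.mpr K.one_mem⟩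
    refine ⟨R, N * hfin.toFinset.card, hR, Nat.mul_pos hN (Finset.card_pos.mpr hKcard), ?_⟩
    intro x y hxy
    have hsub : {g : G | dist x (g • x) ≤ ε ∧ dist y (g • y) ≤ ε} ⊆
        ⋃ k ∈ hfin.toFinset, (fun a : G ⧸ K => Quotient.out a * k) ''
          {h : G ⧸ K | dist x (h • x) ≤ ε ∧ dist y (h • y) ≤ ε} := by
      intro g hg
      have hk : (Quotient.out ((QuotientGroup.mk g : G ⧸ K)))⁻¹ * g ∈ K := by
        rw [← QuotientGroup.eq]
        exact QuotientGroup.out_eq' _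
      refine Set.mem_biUnion (hfin.mem_toFinset.mpr hk) ?_
      refine ⟨QuotientGroup.mk g, ?_, by group⟩
      constructor
      · have := hg.1; rwa [hsmul] at this
      · have := hg.2; rwa [hsmul] at this
    calc {g : G | dist x (g • x) ≤ ε ∧ dist y (g • y) ≤ ε}.encard
        ≤ _ := Set.encard_le_encard hsub
      _ ≤ ∑ k ∈ hfin.toFinset, ((fun a : G ⧸ K => Quotient.out a * k) ''
          {h : G ⧸ K | dist x (h • x) ≤ ε ∧ dist y (h • y) ≤ ε}).encard :=
        encard_biUnion_le' _ _
      _ ≤ ∑ _k ∈ hfin.toFinset, (N : ℕ∞) := by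
        refine Finset.sum_le_sum fun k _ => ?_
        exact le_trans (Set.encard_image_le _ _) (hbound x y hxy)
      _ = hfin.toFinset.card • (N : ℕ∞) := by rw [Finset.sum_const]
      _ ≤ ((N * hfin.toFinset.card : ℕ) : ℕ∞) := by
        rw [nsmul_eq_mul, Nat.cast_mul, mul_comm]
  · obtain ⟨s, hs⟩ := hunb
    refine ⟨s, fun hb => hs ?_⟩
    have : (Set.range fun h : G ⧸ K => h • s) = Set.range fun g : G => g • s := by
      ext t
      constructor
      · rintro ⟨h, rfl⟩
        obtain ⟨g, rfl⟩ := QuotientGroup.mk'_surjective K h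
        exact ⟨g, rfl⟩
      · rintro ⟨g, rfl⟩
        exact ⟨QuotientGroup.mk' K g, rfl⟩
    rwa [this]

end Backward

section GP
variable {X : Type*} [MetricSpace X]

/-- Gromov product -/
noncomputable def gp (w a b : X) : ℝ := (dist w a + dist w b - dist a b) / 2

lemma gp_nonneg (w a b : X) : 0 ≤ gp w a b := by
  have := dist_triangle a w b
  unfold gp
  rw [dist_comm a w] at this
  linarith

lemma gp_comm (w a b : X) : gp w a b = gp w b a := by
  unfold gp; rw [dist_comm a b]; ring_nf

lemma gp_le_dist (w a b : X) : gp w a b ≤ dist w a := by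
  have := dist_triangle w a b  -- dist w b ≤ dist w a + dist a b
  have h2 := dist_triangle w b a
  unfold gp
  have : dist w b ≤ dist w a + dist a b := dist_triangle w a b
  linarith

/-- distance from the endpoints along a geodesic -/
lemma geod_dist_from_left {γ : ℝ → X} {a b : X} (h : IsGeodesicParam γ a b)
    {t : ℝ} (ht : t ∈ Set.Icc (0:ℝ) (dist a b)) : dist a (γ t) = t := by
  obtain ⟨h0, hL, hp⟩ := h
  have := hp 0 ⟨le_refl 0, dist_nonneg⟩ t ht
  rw [h0] at this
  rw [this, abs_of_nonpos (by linarith [ht.1])]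
  ring

lemma geod_dist_to_right {γ : ℝ → X} {a b : X} (h : IsGeodesicParam γ a b)
    {t : ℝ} (ht : t ∈ Set.Icc (0:ℝ) (dist a b)) : dist (γ t) b = dist a b - t := by
  obtain ⟨h0, hL, hp⟩ := h
  have := hp t ht (dist a b) ⟨dist_nonneg, le_refl _⟩
  rw [hL] at this
  rw [this, abs_of_nonpos (by linarith [ht.2])]
  ring

/-- In a space satisfying the four-point condition (at every basepoint) with constant `e`,
any point `p` is within `gp p a b + 2e` of any geodesic from `a` to `b`. -/
lemma dist_to_geod {e : ℝ}
    (h4 : ∀ w x y z : X, min (gp w x z) (gp w z y) ≤ gp w x y + e)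
    {γ : ℝ → X} {a b : X} (h : IsGeodesicParam γ a b) (p : X) :
    ∃ u ∈ Set.Icc (0:ℝ) (dist a b), dist p (γ u) ≤ gp p a b + 2 * e := by
  set t0 := gp a b p with ht0
  have hα0 : 0 ≤ t0 := gp_nonneg a b p
  have hαL : t0 ≤ dist a b := by
    have h1 : dist a p ≤ dist a b + dist b p := dist_triangle a b p
    rw [ht0]; simp only [gp]
    linarith
  refine ⟨t0, ⟨hα0, hαL⟩, ?_⟩
  have hxm : dist a (γ t0) = t0 := geod_dist_from_left h ⟨hα0, hαL⟩
  have hmz : dist (γ t0) b = dist a b - t0 := geod_dist_to_right h ⟨hα0, hαL⟩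
  have hc : dist b (γ t0) = dist a b - t0 := by rw [dist_comm]; exact hmz
  have e1 : gp a b (γ t0) = t0 := by
    simp only [gp]
    linarith
  have h4' := h4 a p (γ t0) b
  rw [gp_comm a p b, ← ht0, e1, min_self] at h4'
  -- h4' : t0 ≤ gp a p (γ t0) + e
  have ht0' : t0 = (dist a b + dist a p - dist b p) / 2 := by rw [ht0]; simp only [gp]
  have o2 : dist p (γ t0) = dist (γ t0) p := dist_comm _ _
  have o3 : dist p a = dist a p := dist_comm _ _
  have o4 : dist p b = dist b p := dist_comm _ _
  simp only [gp] at h4' ⊢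
  linarith

end GP

section GP2
variable {X : Type*} [MetricSpace X]

lemma gp_le_dist_geodpoint {γ : ℝ → X} {a b : X} (h : IsGeodesicParam γ a b) {u : ℝ}
    (hu : u ∈ Set.Icc (0:ℝ) (dist a b)) (w : X) : gp w a b ≤ dist w (γ u) := by
  have d1 : dist a (γ u) = u := geod_dist_from_left h hu
  have d2 : dist (γ u) b = dist a b - u := geod_dist_to_right h hu
  have t1 : dist w a ≤ dist w (γ u) + dist (γ u) a := dist_triangle _ _ _
  have t2 : dist w b ≤ dist w (γ u) + dist (γ u) b := dist_triangle _ _ _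
  have o1 : dist (γ u) a = dist a (γ u) := dist_comm _ _
  simp only [gp]
  linarith

lemma geod_lipschitzOn {γ : ℝ → X} {a b : X} (h : IsGeodesicParam γ a b) :
    ContinuousOn γ (Set.Icc (0:ℝ) (dist a b)) := by
  refine (LipschitzOnWith.of_dist_le_mul (K := 1) ?_).continuousOn
  intro s hs t ht
  rw [h.2.2 s hs t ht]
  simp [Real.dist_eq]

lemma gp_base_identity (c w u v : X) : gp w u v = dist w c + gp c u v - gp c u w - gp c v w := by
  simp only [gp]
  have o1 : dist w u = dist u w := dist_comm _ _
  have o2 : dist w v = dist v w := dist_comm _ _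
  have o3 : dist w c = dist c w := dist_comm _ _
  linarith

lemma base_change {c : X} {e : ℝ}
    (hb : ∀ x y z : X, min (gp c x z) (gp c z y) ≤ gp c x y + e) :
    ∀ w x y z : X, min (gp w x z) (gp w z y) ≤ gp w x y + 2 * e := by
  have claim : ∀ x y z w : X,
      min (gp c x z + gp c y w) (gp c y z + gp c x w) ≤ gp c x y + gp c z w + 2 * e := by
    intro x y z w
    have F1 : min (gp c x z) (gp c y z) ≤ gp c x y + e := by
      have := hb x y z; rwa [gp_comm c z y] at this
    have F2 : min (gp c x w) (gp c y w) ≤ gp c x y + e := by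
      have := hb x y w; rwa [gp_comm c w y] at this
    have F3 : min (gp c x z) (gp c x w) ≤ gp c z w + e := by
      have := hb z w x; rwa [gp_comm c z x] at this
    have F4 : min (gp c y z) (gp c y w) ≤ gp c z w + e := by
      have := hb z w y; rwa [gp_comm c z y] at this
    set a := gp c x z
    set b := gp c y w
    set c' := gp c y z
    set e' := gp c x w
    rcases le_total a c' with hA | hA
    · rcases le_total b c' with hB | hB
      · -- pxy ≥ a - e, pzw ≥ b - e
        rw [min_eq_left hA] at F1
        rw [min_eq_right hB] at F4
        exact le_trans (min_le_left _ _) (by linarith)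
      · rcases le_total e' b with hE | hE
        · rw [min_eq_left hE] at F2
          rw [min_eq_left hB] at F4
          exact le_trans (min_le_right _ _) (by linarith)
        · rw [min_eq_right hE] at F2
          rcases le_total a e' with hAE | hAE
          · rw [min_eq_left hAE] at F3
            exact le_trans (min_le_left _ _) (by linarith)
          · rw [min_eq_right hAE] at F3
            exact le_trans (min_le_right _ _) (by linarith)
    · rcases le_total e' a with hB | hB
      · rw [min_eq_right hA] at F1
        rw [min_eq_right hB] at F3
        exact le_trans (min_le_right _ _) (by linarith)
      · rcases le_total b e' with hE | hE
        · rw [min_eq_right hE] at F2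
          rw [min_eq_left hB] at F3
          exact le_trans (min_le_left _ _) (by linarith)
        · rw [min_eq_left hE] at F2
          rcases le_total c' b with hCB | hCB
          · rw [min_eq_left hCB] at F4
            exact le_trans (min_le_right _ _) (by linarith)
          · rw [min_eq_right hCB] at F4
            exact le_trans (min_le_left _ _) (by linarith)
  intro w x y z
  have h1 := claim x y z w
  have i1 : gp w x z = dist w c + gp c x z - gp c x w - gp c z w := gp_base_identity c w x z
  have i2 : gp w z y = dist w c + gp c z y - gp c z w - gp c y w := gp_base_identity c w z y
  have i3 : gp w x y = dist w c + gp c x y - gp c x w - gp c y w := gp_base_identity c w x y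
  have oc : gp c z y = gp c y z := gp_comm c z y
  rcases le_total (gp c x z + gp c y w) (gp c y z + gp c x w) with hm | hm
  · rw [min_eq_left hm] at h1
    exact le_trans (min_le_left _ _) (by linarith)
  · rw [min_eq_right hm] at h1
    exact le_trans (min_le_right _ _) (by linarith)

end GP2

section GP3
variable {X : Type*} [MetricSpace X]

/-- Notation for the thin-triangles hypothesis. -/
def ThinTriangles (X : Type*) [MetricSpace X] (δ : ℝ) : Prop :=
  ∀ (x y z : X) (γ₁ γ₂ γ₃ : ℝ → X),
    IsGeodesicParam γ₁ x y → IsGeodesicParam γ₂ y z → IsGeodesicParam γ₃ x z →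
      SideThin δ (geodSide γ₁ x y) (geodSide γ₂ y z) (geodSide γ₃ x z) ∧
      SideThin δ (geodSide γ₂ y z) (geodSide γ₁ x y) (geodSide γ₃ x z) ∧
      SideThin δ (geodSide γ₃ x z) (geodSide γ₁ x y) (geodSide γ₂ y z)

lemma exists_near_point {δ : ℝ} (hδ : 0 ≤ δ) (hgeo : GeodesicSpace X)
    (hthin : ThinTriangles X δ) (w x y : X) {γ₁ : ℝ → X} (h1 : IsGeodesicParam γ₁ x y) :
    ∃ s ∈ Set.Icc (0:ℝ) (dist x y), dist w (γ₁ s) ≤ gp w x y + 2*δ := by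
  obtain ⟨γ₂, h2⟩ := hgeo y w
  obtain ⟨γ₃, h3⟩ := hgeo x w
  set T₂ := geodSide γ₂ y w with hT₂
  set T₃ := geodSide γ₃ x w with hT₃
  have hT₂c : IsCompact T₂ := isCompact_Icc.image_of_continuousOn (geod_lipschitzOn h2)
  have hT₃c : IsCompact T₃ := isCompact_Icc.image_of_continuousOn (geod_lipschitzOn h3)
  have hT₂n : T₂.Nonempty := ⟨y, 0, ⟨le_refl 0, dist_nonneg⟩, h2.1⟩
  have hT₃n : T₃.Nonempty := ⟨x, 0, ⟨le_refl 0, dist_nonneg⟩, h3.1⟩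
  set f : ℝ → ℝ := fun s => Metric.infDist (γ₁ s) T₃ - Metric.infDist (γ₁ s) T₂ with hf
  have hfc : ContinuousOn f (Set.Icc 0 (dist x y)) := by
    apply ContinuousOn.sub
    · exact (Metric.continuous_infDist_pt T₃).comp_continuousOn (geod_lipschitzOn h1)
    · exact (Metric.continuous_infDist_pt T₂).comp_continuousOn (geod_lipschitzOn h1)
  have hf0 : f 0 ≤ 0 := by
    have hx3 : Metric.infDist (γ₁ 0) T₃ = 0 := by
      rw [h1.1]
      exact Metric.infDist_zero_of_mem ⟨0, ⟨le_refl 0, dist_nonneg⟩, h3.1⟩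
    have hx2 : 0 ≤ Metric.infDist (γ₁ 0) T₂ := Metric.infDist_nonneg
    simp only [hf]; linarith
  have hfL : 0 ≤ f (dist x y) := by
    have hy2 : Metric.infDist (γ₁ (dist x y)) T₂ = 0 := by
      rw [h1.2.1]
      exact Metric.infDist_zero_of_mem ⟨0, ⟨le_refl 0, dist_nonneg⟩, h2.1⟩
    have hy3 : 0 ≤ Metric.infDist (γ₁ (dist x y)) T₃ := Metric.infDist_nonneg
    simp only [hf]; linarith
  have hmem : (0:ℝ) ∈ Set.Icc (f 0) (f (dist x y)) := ⟨hf0, hfL⟩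
  obtain ⟨s, hs, hfs⟩ := intermediate_value_Icc dist_nonneg hfc hmem
  -- thinness of side 1
  obtain ⟨q, hq, hdq⟩ := (hthin x y w γ₁ γ₂ γ₃ h1 h2 h3).1 (γ₁ s) ⟨s, hs, rfl⟩
  have hboth : Metric.infDist (γ₁ s) T₂ ≤ δ ∧ Metric.infDist (γ₁ s) T₃ ≤ δ := by
    rcases hq with hq2 | hq3
    · have hle : Metric.infDist (γ₁ s) T₂ ≤ δ := le_trans (Metric.infDist_le_dist_of_mem hq2) hdq
      constructor
      · exact hle
      · have : f s = 0 := hfs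
        simp only [hf] at this
        linarith
    · have hle : Metric.infDist (γ₁ s) T₃ ≤ δ := le_trans (Metric.infDist_le_dist_of_mem hq3) hdq
      constructor
      · have : f s = 0 := hfs
        simp only [hf] at this
        linarith
      · exact hle
  obtain ⟨q₂, hq₂m, hq₂d⟩ := hT₂c.exists_infDist_eq_dist hT₂n (γ₁ s)
  obtain ⟨q₃, hq₃m, hq₃d⟩ := hT₃c.exists_infDist_eq_dist hT₃n (γ₁ s)
  obtain ⟨u₂, hu₂, rfl⟩ := hq₂m
  obtain ⟨u₃, hu₃, rfl⟩ := hq₃m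
  have hd₂ : dist (γ₁ s) (γ₂ u₂) ≤ δ := by rw [← hq₂d]; exact hboth.1
  have hd₃ : dist (γ₁ s) (γ₃ u₃) ≤ δ := by rw [← hq₃d]; exact hboth.2
  -- estimates
  have e1 : dist x (γ₃ u₃) = u₃ := geod_dist_from_left h3 hu₃
  have e2 : dist (γ₃ u₃) w = dist x w - u₃ := geod_dist_to_right h3 hu₃
  have e3 : dist y (γ₂ u₂) = u₂ := geod_dist_from_left h2 hu₂
  have e4 : dist (γ₂ u₂) w = dist y w - u₂ := geod_dist_to_right h2 hu₂
  have e5 : dist x (γ₁ s) = s := geod_dist_from_left h1 hs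
  have e6 : dist (γ₁ s) y = dist x y - s := geod_dist_to_right h1 hs
  have t1 : dist x (γ₃ u₃) ≥ dist x (γ₁ s) - dist (γ₁ s) (γ₃ u₃) := by
    have := dist_triangle x (γ₃ u₃) (γ₁ s)
    have o := dist_comm (γ₃ u₃) (γ₁ s)
    linarith
  have t2 : dist w (γ₁ s) ≤ dist w (γ₃ u₃) + dist (γ₃ u₃) (γ₁ s) := dist_triangle _ _ _
  have t3 : dist y (γ₂ u₂) ≥ dist y (γ₁ s) - dist (γ₁ s) (γ₂ u₂) := by
    have := dist_triangle y (γ₂ u₂) (γ₁ s)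
    have o := dist_comm (γ₂ u₂) (γ₁ s)
    linarith
  have t4 : dist w (γ₁ s) ≤ dist w (γ₂ u₂) + dist (γ₂ u₂) (γ₁ s) := dist_triangle _ _ _
  have o1 : dist w (γ₃ u₃) = dist (γ₃ u₃) w := dist_comm _ _
  have o2 : dist w (γ₂ u₂) = dist (γ₂ u₂) w := dist_comm _ _
  have o3 : dist (γ₃ u₃) (γ₁ s) = dist (γ₁ s) (γ₃ u₃) := dist_comm _ _
  have o4 : dist (γ₂ u₂) (γ₁ s) = dist (γ₁ s) (γ₂ u₂) := dist_comm _ _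
  have o5 : dist y (γ₁ s) = dist (γ₁ s) y := dist_comm _ _
  have o6 : dist w x = dist x w := dist_comm _ _
  have o7 : dist w y = dist y w := dist_comm _ _
  refine ⟨s, hs, ?_⟩
  simp only [gp]
  linarith

lemma fourpoint_of_thin {δ : ℝ} (hδ : 0 ≤ δ) (hgeo : GeodesicSpace X)
    (hthin : ThinTriangles X δ) :
    ∀ w x y z : X, min (gp w x z) (gp w z y) ≤ gp w x y + 3*δ := by
  intro w x y z
  obtain ⟨γ₁, h1⟩ := hgeo x y
  obtain ⟨γ₂, h2⟩ := hgeo y z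
  obtain ⟨γ₃, h3⟩ := hgeo x z
  obtain ⟨s, hs, hws⟩ := exists_near_point hδ hgeo hthin w x y h1
  obtain ⟨q, hq, hdq⟩ := (hthin x y z γ₁ γ₂ γ₃ h1 h2 h3).1 (γ₁ s) ⟨s, hs, rfl⟩
  have hwq : dist w q ≤ gp w x y + 3*δ := by
    have := dist_triangle w (γ₁ s) q
    linarith
  rcases hq with hq2 | hq3
  · obtain ⟨u, hu, rfl⟩ := hq2
    have := gp_le_dist_geodpoint h2 hu w
    have hcm : gp w z y = gp w y z := gp_comm w z y
    exact le_trans (min_le_right _ _) (by linarith)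
  · obtain ⟨u, hu, rfl⟩ := hq3
    have := gp_le_dist_geodpoint h3 hu w
    exact le_trans (min_le_left _ _) (by linarith)

/-- Thin triangles from the all-basepoints four-point condition. -/
lemma sidethin_of_fourpoint {e : ℝ}
    (h4 : ∀ w x y z : X, min (gp w x z) (gp w z y) ≤ gp w x y + e)
    {x y z : X} {γ₁ γ₂ γ₃ : ℝ → X} (h1 : IsGeodesicParam γ₁ x y) (h2 : IsGeodesicParam γ₂ y z)
    (h3 : IsGeodesicParam γ₃ x z) :
    SideThin (3*e) (geodSide γ₁ x y) (geodSide γ₂ y z) (geodSide γ₃ x z) := by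
  rintro p ⟨t, ht, rfl⟩
  have hpx : dist x (γ₁ t) = t := geod_dist_from_left h1 ht
  have hpy : dist (γ₁ t) y = dist x y - t := geod_dist_to_right h1 ht
  have hgp0 : gp (γ₁ t) x y = 0 := by
    simp only [gp]
    have o1 : dist (γ₁ t) x = dist x (γ₁ t) := dist_comm _ _
    linarith
  have h4' := h4 (γ₁ t) x y z
  rw [hgp0, zero_add] at h4'
  rcases min_le_iff.mp h4' with hc | hc
  · obtain ⟨u, hu, hd⟩ := dist_to_geod h4 h3 (γ₁ t)
    refine ⟨γ₃ u, Or.inr ⟨u, hu, rfl⟩, ?_⟩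
    have hgpe : gp (γ₁ t) x z ≤ e := hc
    linarith
  · obtain ⟨u, hu, hd⟩ := dist_to_geod h4 h2 (γ₁ t)
    refine ⟨γ₂ u, Or.inl ⟨u, hu, rfl⟩, ?_⟩
    have hcm : gp (γ₁ t) z y = gp (γ₁ t) y z := gp_comm _ _ _
    linarith

lemma sidethin2_of_fourpoint {e : ℝ}
    (h4 : ∀ w x y z : X, min (gp w x z) (gp w z y) ≤ gp w x y + e)
    {x y z : X} {γ₁ γ₂ γ₃ : ℝ → X} (h1 : IsGeodesicParam γ₁ x y) (h2 : IsGeodesicParam γ₂ y z)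
    (h3 : IsGeodesicParam γ₃ x z) :
    SideThin (3*e) (geodSide γ₂ y z) (geodSide γ₁ x y) (geodSide γ₃ x z) := by
  rintro p ⟨t, ht, rfl⟩
  have hpx : dist y (γ₂ t) = t := geod_dist_from_left h2 ht
  have hpy : dist (γ₂ t) z = dist y z - t := geod_dist_to_right h2 ht
  have hgp0 : gp (γ₂ t) y z = 0 := by
    simp only [gp]
    have o1 : dist (γ₂ t) y = dist y (γ₂ t) := dist_comm _ _
    linarith
  have h4' := h4 (γ₂ t) y z x
  rw [hgp0, zero_add] at h4'
  rcases min_le_iff.mp h4' with hc | hc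
  · obtain ⟨u, hu, hd⟩ := dist_to_geod h4 h1 (γ₂ t)
    refine ⟨γ₁ u, Or.inl ⟨u, hu, rfl⟩, ?_⟩
    have hcm : gp (γ₂ t) y x = gp (γ₂ t) x y := gp_comm _ _ _
    linarith
  · obtain ⟨u, hu, hd⟩ := dist_to_geod h4 h3 (γ₂ t)
    refine ⟨γ₃ u, Or.inr ⟨u, hu, rfl⟩, ?_⟩
    linarith

lemma sidethin3_of_fourpoint {e : ℝ}
    (h4 : ∀ w x y z : X, min (gp w x z) (gp w z y) ≤ gp w x y + e)
    {x y z : X} {γ₁ γ₂ γ₃ : ℝ → X} (h1 : IsGeodesicParam γ₁ x y) (h2 : IsGeodesicParam γ₂ y z)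
    (h3 : IsGeodesicParam γ₃ x z) :
    SideThin (3*e) (geodSide γ₃ x z) (geodSide γ₁ x y) (geodSide γ₂ y z) := by
  rintro p ⟨t, ht, rfl⟩
  have hpx : dist x (γ₃ t) = t := geod_dist_from_left h3 ht
  have hpy : dist (γ₃ t) z = dist x z - t := geod_dist_to_right h3 ht
  have hgp0 : gp (γ₃ t) x z = 0 := by
    simp only [gp]
    have o1 : dist (γ₃ t) x = dist x (γ₃ t) := dist_comm _ _
    linarith
  have h4' := h4 (γ₃ t) x z y
  rw [hgp0, zero_add] at h4'
  rcases min_le_iff.mp h4' with hc | hc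
  · obtain ⟨u, hu, hd⟩ := dist_to_geod h4 h1 (γ₃ t)
    refine ⟨γ₁ u, Or.inl ⟨u, hu, rfl⟩, ?_⟩
    linarith
  · obtain ⟨u, hu, hd⟩ := dist_to_geod h4 h2 (γ₃ t)
    refine ⟨γ₂ u, Or.inr ⟨u, hu, rfl⟩, ?_⟩
    have hcm : gp (γ₃ t) y z = gp (γ₃ t) z y := gp_comm _ _ _
    linarith

end GP3

section PreD
variable {G : Type*} [Group G] {S : Type*} [MetricSpace S] [MulAction G S]

variable {K : Subgroup G}

lemma KFne (hfin : (K : Set G).Finite) : hfin.toFinset.Nonempty :=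
  ⟨1, hfin.mem_toFinset.mpr K.one_mem⟩

noncomputable def preD (hfin : (K : Set G).Finite) (a b : S) : ℝ :=
  hfin.toFinset.inf' (KFne hfin) fun k => dist a (k • b)

lemma preD_le (hfin : (K : Set G).Finite) {k : G} (hk : k ∈ K) (a b : S) :
    preD hfin a b ≤ dist a (k • b) :=
  Finset.inf'_le _ (hfin.mem_toFinset.mpr hk)

lemma preD_exists (hfin : (K : Set G).Finite) (a b : S) :
    ∃ k, k ∈ K ∧ preD hfin a b = dist a (k • b) := by
  obtain ⟨k, hk, he⟩ := Finset.exists_mem_eq_inf' (KFne hfin) (fun k => dist a (k • b))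
  exact ⟨k, hfin.mem_toFinset.mp hk, he⟩

lemma le_preD (hfin : (K : Set G).Finite) {a b : S} {r : ℝ}
    (h : ∀ k, k ∈ K → r ≤ dist a (k • b)) : r ≤ preD hfin a b :=
  Finset.le_inf' _ _ fun k hk => h k (hfin.mem_toFinset.mp hk)

lemma preD_nonneg (hfin : (K : Set G).Finite) (a b : S) : 0 ≤ preD hfin a b := by
  obtain ⟨k, _, he⟩ := preD_exists hfin a b
  rw [he]; exact dist_nonneg

lemma preD_le_dist (hfin : (K : Set G).Finite) (a b : S) : preD hfin a b ≤ dist a b := by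
  have := preD_le hfin K.one_mem a b
  rwa [one_smul] at this

lemma dist_smul_left (hiso : IsIsometricAction G S) (k : G) (a b : S) :
    dist a (k • b) = dist (k⁻¹ • a) b := by
  have := hiso k⁻¹ a (k • b)
  rw [inv_smul_smul] at this
  exact this.symm

lemma preD_comm (hfin : (K : Set G).Finite) (hiso : IsIsometricAction G S) (a b : S) :
    preD hfin a b = preD hfin b a := by
  have h : ∀ a b : S, preD hfin a b ≤ preD hfin b a := by
    intro a b
    refine le_preD hfin fun k hk => ?_
    have h1 : preD hfin a b ≤ dist a (k⁻¹ • b) := preD_le hfin (K.inv_mem hk) a b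
    rw [dist_smul_left hiso, inv_inv, dist_comm] at h1
    exact h1
  exact le_antisymm (h a b) (h b a)

lemma preD_triangle (hfin : (K : Set G).Finite) (hiso : IsIsometricAction G S) (a b c : S) :
    preD hfin a c ≤ preD hfin a b + preD hfin b c := by
  obtain ⟨k₁, hk₁, e₁⟩ := preD_exists hfin a b
  obtain ⟨k₂, hk₂, e₂⟩ := preD_exists hfin b c
  have h1 : preD hfin a c ≤ dist a ((k₁ * k₂) • c) := preD_le hfin (K.mul_mem hk₁ hk₂) a c
  have h2 : dist a ((k₁ * k₂) • c) ≤ dist a (k₁ • b) + dist (k₁ • b) ((k₁ * k₂) • c) :=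
    dist_triangle _ _ _
  have h3 : dist (k₁ • b) ((k₁ * k₂) • c) = dist b (k₂ • c) := by
    rw [mul_smul]; exact hiso k₁ b (k₂ • c)
  rw [h3] at h2
  linarith
 
lemma preD_left_inv (hfin : (K : Set G).Finite) (hiso : IsIsometricAction G S)
    {k₀ : G} (hk₀ : k₀ ∈ K) (a b : S) : preD hfin (k₀ • a) b = preD hfin a b := by
  have h : ∀ (k₀ : G), k₀ ∈ K → ∀ a b : S, preD hfin (k₀ • a) b ≤ preD hfin a b := by
    intro k₀ hk₀ a b
    refine le_preD hfin fun k hk => ?_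
    have h1 : preD hfin (k₀ • a) b ≤ dist (k₀ • a) ((k₀ * k) • b) :=
      preD_le hfin (K.mul_mem hk₀ hk) _ b
    rw [mul_smul] at h1
    rwa [hiso k₀ a (k • b)] at h1
  refine le_antisymm (h k₀ hk₀ a b) ?_
  have := h k₀⁻¹ (K.inv_mem hk₀) (k₀ • a) b
  rwa [inv_smul_smul] at this

lemma preD_right_inv (hfin : (K : Set G).Finite) (hiso : IsIsometricAction G S)
    {k₀ : G} (hk₀ : k₀ ∈ K) (a b : S) : preD hfin a (k₀ • b) = preD hfin a b := by
  rw [preD_comm hfin hiso, preD_left_inv hfin hiso hk₀, preD_comm hfin hiso]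

lemma preD_smul [hN : K.Normal] (hfin : (K : Set G).Finite) (hiso : IsIsometricAction G S)
    (g : G) (a b : S) : preD hfin (g • a) (g • b) = preD hfin a b := by
  have h : ∀ (g : G) (a b : S), preD hfin (g • a) (g • b) ≤ preD hfin a b := by
    intro g a b
    refine le_preD hfin fun k hk => ?_
    have hmem : g * k * g⁻¹ ∈ K := hN.conj_mem k hk g
    have h1 : preD hfin (g • a) (g • b) ≤ dist (g • a) ((g * k * g⁻¹) • (g • b)) :=
      preD_le hfin hmem _ _
    have h2 : (g * k * g⁻¹) • (g • b) = g • (k • b) := by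
      rw [← mul_smul, ← mul_smul]
      congr 1
      group
    rw [h2] at h1
    rwa [hiso g a (k • b)] at h1
  refine le_antisymm (h g a b) ?_
  have := h g⁻¹ (g • a) (g • b)
  rwa [inv_smul_smul, inv_smul_smul] at this

/-- quasicenter of the K-orbit of x₀ -/
lemma quasicenter (hfin : (K : Set G).Finite) (hiso : IsIsometricAction G S)
    {δ : ℝ} (hδ : 0 ≤ δ) (hgeo : GeodesicSpace S) (hthin : ThinTriangles S δ)
    (x₀ : S) : ∃ c : S, ∀ k ∈ K, dist c (k • c) ≤ 4*δ + 2 := by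
  classical
  set φ : S → ℝ := fun p => hfin.toFinset.sup' (KFne hfin) (fun k => dist p (k • x₀)) with hφ
  have hφle : ∀ (p : S) {j : G}, j ∈ K → dist p (j • x₀) ≤ φ p := by
    intro p j hj
    simp only [hφ]
    exact Finset.le_sup' (fun k => dist p (k • x₀)) (hfin.mem_toFinset.mpr hj)
  have hφ0 : ∀ p, 0 ≤ φ p := fun p => le_trans dist_nonneg (hφle p K.one_mem)
  have hbdd : BddBelow (Set.range φ) := ⟨0, by rintro v ⟨p, rfl⟩; exact hφ0 p⟩
  have hrne : (Set.range φ).Nonempty := ⟨φ x₀, x₀, rfl⟩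
  set r := sInf (Set.range φ) with hr
  have hex : ∃ c : S, φ c < r + 1 := by
    by_contra hcon
    push_neg at hcon
    have h2 : r + 1 ≤ r := by
      rw [hr]
      refine le_csInf hrne ?_
      rintro v ⟨p, rfl⟩
      rw [← hr]
      exact hcon p
    linarith
  obtain ⟨c, hc⟩ := hex
  refine ⟨c, fun k hk => ?_⟩
  set d := dist c (k • c) with hd
  obtain ⟨γ, hγ⟩ := hgeo c (k • c)
  have hd0 : 0 ≤ d := by rw [hd]; exact dist_nonneg
  have hdmem : d/2 ∈ Set.Icc (0:ℝ) (dist c (k • c)) := ⟨by linarith, by rw [← hd]; linarith⟩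
  have hm1 : dist c (γ (d/2)) = d/2 := by
    have := geod_dist_from_left hγ hdmem
    exact this
  have hm2 : dist (γ (d/2)) (k • c) = d/2 := by
    have := geod_dist_to_right hγ hdmem
    rw [← hd] at this
    rw [this]; ring
  -- bound φ m
  have hφm : φ (γ (d/2)) ≤ φ c - d/2 + 2*δ := by
    simp only [hφ]
    refine Finset.sup'_le _ _ fun j hj => ?_
    have hjK : j ∈ K := hfin.mem_toFinset.mp hj
    obtain ⟨γ₂, hγ₂⟩ := hgeo (k • c) (j • x₀)
    obtain ⟨γ₃, hγ₃⟩ := hgeo c (j • x₀)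
    obtain ⟨q, hq, hdq⟩ := (hthin c (k • c) (j • x₀) γ γ₂ γ₃ hγ hγ₂ hγ₃).1 (γ (d/2))
      ⟨d/2, hdmem, rfl⟩
    have hφcj : dist c (j • x₀) ≤ φ c := hφle c hjK
    have hφckj : dist (k • c) (j • x₀) ≤ φ c := by
      have he : dist (k • c) (j • x₀) = dist c ((k⁻¹ * j) • x₀) := by
        have := hiso k⁻¹ (k • c) (j • x₀)
        rw [inv_smul_smul, ← mul_smul] at this
        exact this.symm
      rw [he]
      exact hφle c (K.mul_mem (K.inv_mem hk) hjK)
    rcases hq with hq2 | hq3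
    · obtain ⟨u, hu, rfl⟩ := hq2
      have e1 : dist (k • c) (γ₂ u) = u := geod_dist_from_left hγ₂ hu
      have e2 : dist (γ₂ u) (j • x₀) = dist (k • c) (j • x₀) - u := geod_dist_to_right hγ₂ hu
      have t1 : dist (k • c) (γ₂ u) ≥ dist (k • c) (γ (d/2)) - dist (γ (d/2)) (γ₂ u) := by
        have h' := dist_triangle (k • c) (γ₂ u) (γ (d/2))
        have o' : dist (γ₂ u) (γ (d/2)) = dist (γ (d/2)) (γ₂ u) := dist_comm _ _
        linarith
      have t2 : dist (γ (d/2)) (j • x₀) ≤ dist (γ (d/2)) (γ₂ u) + dist (γ₂ u) (j • x₀) :=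
        dist_triangle _ _ _
      have o1 : dist (k • c) (γ (d/2)) = dist (γ (d/2)) (k • c) := dist_comm _ _
      linarith
    · obtain ⟨u, hu, rfl⟩ := hq3
      have e1 : dist c (γ₃ u) = u := geod_dist_from_left hγ₃ hu
      have e2 : dist (γ₃ u) (j • x₀) = dist c (j • x₀) - u := geod_dist_to_right hγ₃ hu
      have t1 : dist c (γ₃ u) ≥ dist c (γ (d/2)) - dist (γ (d/2)) (γ₃ u) := by
        have h' := dist_triangle c (γ₃ u) (γ (d/2))
        have o' : dist (γ₃ u) (γ (d/2)) = dist (γ (d/2)) (γ₃ u) := dist_comm _ _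
        linarith
      have t2 : dist (γ (d/2)) (j • x₀) ≤ dist (γ (d/2)) (γ₃ u) + dist (γ₃ u) (j • x₀) :=
        dist_triangle _ _ _
      linarith
  have hrm : r ≤ φ (γ (d/2)) := by rw [hr]; exact csInf_le hbdd ⟨γ (d/2), rfl⟩
  have hrc : r ≤ φ c := by rw [hr]; exact csInf_le hbdd ⟨c, rfl⟩
  have : d ≤ 4*δ + 2 := by linarith
  rw [hd] at this
  exact this

end PreD

lemma encard_biUnion_le'' {α β : Type*} (s : Finset β) (f : β → Set α) :
    (⋃ b ∈ s, f b).encard ≤ ∑ b ∈ s, (f b).encard := by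
  classical
  induction s using Finset.induction with
  | empty => simp
  | @insert a s ha ih =>
    rw [Finset.set_biUnion_insert, Finset.sum_insert ha]
    exact le_trans (Set.encard_union_le _ _) (add_le_add le_rfl ih)

section Forward
variable {G : Type*} [Group G]

def orbSetoid (K : Subgroup G) (S : Type*) [MulAction G S] : Setoid S where
  r a b := ∃ k, k ∈ K ∧ k • a = b
  iseqv := by
    constructor
    · exact fun a => ⟨1, K.one_mem, one_smul G a⟩
    · rintro a b ⟨k, hk, rfl⟩
      exact ⟨k⁻¹, K.inv_mem hk, inv_smul_smul k a⟩
    · rintro a b c ⟨k, hk, rfl⟩ ⟨j, hj, rfl⟩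
      exact ⟨j * k, K.mul_mem hj hk, mul_smul j k a⟩

lemma forward_space (K : Subgroup G) [hN : K.Normal] (hfin : (K : Set G).Finite)
    (S : Type) [mS : MetricSpace S] [act : MulAction G S]
    (hiso : IsIsometricAction G S) (hgeo : GeodesicSpace S) {δ : ℝ} (hδ : 0 ≤ δ)
    (hthin : ThinTriangles S δ) (hacyl : AcylindricalAction G S)
    (hunb : UnboundedOrbits G S) :
    ∃ (Q : Type) (_ : MetricSpace Q) (_ : MulAction (G ⧸ K) Q),
      IsIsometricAction (G ⧸ K) Q ∧
      (GeodesicSpace Q ∧ ∃ δ' : ℝ, 0 ≤ δ' ∧ ThinTriangles Q δ') ∧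
      AcylindricalAction (G ⧸ K) Q ∧ UnboundedOrbits (G ⧸ K) Q := by
  classical
  obtain ⟨s₀, hs₀⟩ := hunb
  letI mQ : MetricSpace (Quotient (orbSetoid K S)) :=
    { dist := Quotient.lift₂ (preD hfin) (by
        intro a b a' b' ha hb
        obtain ⟨k, hk, rfl⟩ := ha
        obtain ⟨j, hj, rfl⟩ := hb
        rw [preD_left_inv hfin hiso hk, preD_right_inv hfin hiso hj])
      dist_self := by
        intro x
        refine Quotient.inductionOn x ?_
        intro a
        show preD hfin a a = 0
        refine le_antisymm ?_ (preD_nonneg hfin a a)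
        have := preD_le_dist hfin a a
        simpa using this
      dist_comm := by
        intro x y
        refine Quotient.inductionOn₂ x y ?_
        intro a b
        exact preD_comm hfin hiso a b
      dist_triangle := by
        intro x y z
        refine Quotient.inductionOn₃ x y z ?_
        intro a b c
        exact preD_triangle hfin hiso a b c
      eq_of_dist_eq_zero := by
        intro x y
        refine Quotient.inductionOn₂ x y ?_
        intro a b h
        obtain ⟨k, hk, he⟩ := preD_exists hfin a b
        have h' : preD hfin a b = 0 := h
        rw [he] at h'
        have hab : a = k • b := dist_eq_zero.mp h'
        refine Quotient.sound ⟨k⁻¹, K.inv_mem hk, ?_⟩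
        rw [hab, inv_smul_smul] }
  letI actQ : MulAction (G ⧸ K) (Quotient (orbSetoid K S)) :=
    { smul := fun gq xq => Quotient.liftOn₂ gq xq
        (fun g x => (Quotient.mk (orbSetoid K S) (g • x)))
        (by
          intro g x g' x' hg hx
          obtain ⟨k, hk, rfl⟩ := hx
          have hg' : g⁻¹ * g' ∈ K := QuotientGroup.leftRel_apply.mp hg
          apply Quotient.sound
          refine ⟨g * (g⁻¹ * g' * k) * g⁻¹, hN.conj_mem _ (K.mul_mem hg' hk) g, ?_⟩
          rw [← mul_smul, ← mul_smul]
          congr 1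
          group)
      one_smul := by
        intro x
        refine Quotient.inductionOn x ?_
        intro a
        show Quotient.mk (orbSetoid K S) ((1 : G) • a) = _
        rw [one_smul]
      mul_smul := by
        intro g h x
        refine QuotientGroup.induction_on g ?_
        intro g'
        refine QuotientGroup.induction_on h ?_
        intro h'
        refine Quotient.inductionOn x ?_
        intro a
        show Quotient.mk (orbSetoid K S) ((g' * h') • a) = Quotient.mk (orbSetoid K S) (g' • (h' • a))
        rw [mul_smul] }
  have hdistmk : ∀ a b : S,
      dist (Quotient.mk (orbSetoid K S) a) (Quotient.mk (orbSetoid K S) b) = preD hfin a b :=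
    fun a b => rfl
  have hsmulmk : ∀ (g : G) (a : S),
      (QuotientGroup.mk g : G ⧸ K) • (Quotient.mk (orbSetoid K S) a) =
        Quotient.mk (orbSetoid K S) (g • a) := fun g a => rfl
  have hmk_eq : ∀ {k : G}, k ∈ K → ∀ (b : S),
      Quotient.mk (orbSetoid K S) (k • b) = Quotient.mk (orbSetoid K S) b := by
    intro k hk b
    exact Quotient.sound ⟨k⁻¹, K.inv_mem hk, inv_smul_smul k b⟩
  refine ⟨Quotient (orbSetoid K S), mQ, actQ, ?_, ?_, ?_, ?_⟩
  · -- isometric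
    intro g x y
    refine QuotientGroup.induction_on g ?_
    intro g'
    refine Quotient.inductionOn₂ x y ?_
    intro a b
    rw [hsmulmk, hsmulmk, hdistmk, hdistmk]
    exact preD_smul hfin hiso g' a b
  · -- geodesic + hyperbolic
    have hgeoQ : GeodesicSpace (Quotient (orbSetoid K S)) := by
      intro x y
      refine Quotient.inductionOn₂ x y ?_
      intro a b
      obtain ⟨k, hk, he⟩ := preD_exists hfin a b
      obtain ⟨γ, hγ⟩ := hgeo a (k • b)
      have hd : dist (Quotient.mk (orbSetoid K S) a) (Quotient.mk (orbSetoid K S) b) =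
          dist a (k • b) := by rw [hdistmk, he]
      refine ⟨fun t => Quotient.mk (orbSetoid K S) (γ t), ?_, ?_, ?_⟩
      · show Quotient.mk (orbSetoid K S) (γ 0) = Quotient.mk (orbSetoid K S) a
        rw [hγ.1]
      · show Quotient.mk (orbSetoid K S)
            (γ (dist (Quotient.mk (orbSetoid K S) a) (Quotient.mk (orbSetoid K S) b))) =
          Quotient.mk (orbSetoid K S) b
        rw [hd, hγ.2.1, hmk_eq hk]
      · intro s hs t ht
        show dist (Quotient.mk (orbSetoid K S) (γ s)) (Quotient.mk (orbSetoid K S) (γ t)) = |s - t|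
        rw [hd] at hs ht
        have hub : ∀ u v : ℝ, u ∈ Set.Icc (0:ℝ) (dist a (k • b)) →
            v ∈ Set.Icc (0:ℝ) (dist a (k • b)) → u ≤ v →
            dist (Quotient.mk (orbSetoid K S) (γ u)) (Quotient.mk (orbSetoid K S) (γ v)) =
              v - u := by
          intro u v hu hv huv
          refine le_antisymm ?_ ?_
          · rw [hdistmk]
            have h1 : preD hfin (γ u) (γ v) ≤ dist (γ u) (γ v) := preD_le_dist hfin _ _
            rw [hγ.2.2 u hu v hv, abs_of_nonpos (by linarith)] at h1
            linarith
          · have t1 : dist (Quotient.mk (orbSetoid K S) a) (Quotient.mk (orbSetoid K S) b) ≤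
                dist (Quotient.mk (orbSetoid K S) a) (Quotient.mk (orbSetoid K S) (γ u)) +
                dist (Quotient.mk (orbSetoid K S) (γ u)) (Quotient.mk (orbSetoid K S) (γ v)) +
                dist (Quotient.mk (orbSetoid K S) (γ v)) (Quotient.mk (orbSetoid K S) b) :=
              dist_triangle4 _ _ _ _
            have t2 : dist (Quotient.mk (orbSetoid K S) a) (Quotient.mk (orbSetoid K S) (γ u)) ≤
                u := by
              rw [hdistmk]
              have := preD_le_dist hfin a (γ u)
              rw [geod_dist_from_left hγ hu] at this
              exact this
            have t3 : dist (Quotient.mk (orbSetoid K S) (γ v)) (Quotient.mk (orbSetoid K S) b) ≤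
                dist a (k • b) - v := by
              rw [← hmk_eq hk b, hdistmk]
              have := preD_le_dist hfin (γ v) (k • b)
              rw [geod_dist_to_right hγ hv] at this
              exact this
            rw [hd] at t1
            linarith
        rcases le_total s t with hst | hst
        · rw [hub s t hs ht hst, abs_of_nonpos (by linarith)]
          ring
        · rw [dist_comm, hub t s ht hs hst, abs_of_nonneg (by linarith)]
    -- four-point for Q
    have h4S := fourpoint_of_thin hδ hgeo hthin
    obtain ⟨c, hcQC⟩ := quasicenter hfin hiso hδ hgeo hthin s₀
    have hlowpre : ∀ v : S, dist c v - (4*δ + 2) ≤ preD hfin c v := by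
      intro v
      refine le_preD hfin fun k hk => ?_
      have h1 : dist c v ≤ dist c (k⁻¹ • c) + dist (k⁻¹ • c) v := dist_triangle _ _ _
      have h2 : dist c (k⁻¹ • c) ≤ 4*δ + 2 := hcQC k⁻¹ (K.inv_mem hk)
      have h3 : dist (k⁻¹ • c) v = dist c (k • v) := (dist_smul_left hiso k c v).symm
      linarith
    have h4base : ∀ x y z : Quotient (orbSetoid K S),
        min (gp (Quotient.mk (orbSetoid K S) c) x z) (gp (Quotient.mk (orbSetoid K S) c) z y) ≤
          gp (Quotient.mk (orbSetoid K S) c) x y + (3*δ + (4*δ + 2)) := by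
      intro x y z
      refine Quotient.inductionOn₃ x y z ?_
      intro a b d
      obtain ⟨k₁, hk₁, he₁⟩ := preD_exists hfin a d
      obtain ⟨k₂, hk₂, he₂⟩ := preD_exists hfin (k₁ • d) b
      have A1 : preD hfin c a ≤ dist c a := preD_le_dist hfin c a
      have A2 : preD hfin c d ≤ dist c (k₁ • d) := preD_le hfin hk₁ c d
      have B2 : preD hfin c b ≤ dist c (k₂ • b) := preD_le hfin hk₂ c b
      have B3 : preD hfin d b = dist (k₁ • d) (k₂ • b) := by
        rw [← preD_left_inv hfin hiso hk₁ d b]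
        exact he₂
      have C1 : dist c a - (4*δ + 2) ≤ preD hfin c a := hlowpre a
      have C2 : dist c (k₂ • b) - (4*δ + 2) ≤ preD hfin c b := by
        rw [← preD_right_inv hfin hiso hk₂ c b]
        exact hlowpre (k₂ • b)
      have C3 : preD hfin a b ≤ dist a (k₂ • b) := preD_le hfin hk₂ a b
      have h4 := h4S c a (k₂ • b) (k₁ • d)
      have E1 : gp (Quotient.mk (orbSetoid K S) c) (Quotient.mk (orbSetoid K S) a)
          (Quotient.mk (orbSetoid K S) d) ≤ gp c a (k₁ • d) := by
        simp only [gp, hdistmk]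
        linarith [he₁]
      have E2 : gp (Quotient.mk (orbSetoid K S) c) (Quotient.mk (orbSetoid K S) d)
          (Quotient.mk (orbSetoid K S) b) ≤ gp c (k₁ • d) (k₂ • b) := by
        simp only [gp, hdistmk]
        linarith [B3]
      have E3 : gp c a (k₂ • b) - (4*δ + 2) ≤
          gp (Quotient.mk (orbSetoid K S) c) (Quotient.mk (orbSetoid K S) a)
            (Quotient.mk (orbSetoid K S) b) := by
        simp only [gp, hdistmk]
        linarith
      have hmin := min_le_min E1 E2
      have := le_trans hmin h4
      exact le_trans this (by linarith)
    have h4Q := base_change h4base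
    refine ⟨hgeoQ, 3*(2*(3*δ + (4*δ + 2))), by linarith, ?_⟩
    intro x y z γ₁ γ₂ γ₃ h1 h2 h3
    exact ⟨sidethin_of_fourpoint h4Q h1 h2 h3, sidethin2_of_fourpoint h4Q h1 h2 h3,
      sidethin3_of_fourpoint h4Q h1 h2 h3⟩
  · -- acylindrical
    intro ε hε
    obtain ⟨R₂, N₂, hR₂, hN₂, hbound⟩ := hacyl (2*ε) (by linarith)
    refine ⟨R₂, N₂ * hfin.toFinset.card, hR₂,
      Nat.mul_pos hN₂ (Finset.card_pos.mpr (KFne hfin)), ?_⟩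
    intro x y
    refine Quotient.inductionOn₂ x y ?_
    intro a b hxy
    obtain ⟨k₀, hk₀, he₀⟩ := preD_exists hfin a b
    have hab' : R₂ ≤ dist a (k₀ • b) := by
      rw [hdistmk, he₀] at hxy
      exact hxy
    have hb'mk : Quotient.mk (orbSetoid K S) (k₀ • b) = Quotient.mk (orbSetoid K S) b :=
      hmk_eq hk₀ b
    have hU := hbound a (k₀ • b) hab'
    set V : G → Set G := fun κ =>
      {v : G | dist a (v • a) ≤ ε ∧ dist (k₀ • b) (κ • v • (k₀ • b)) ≤ ε} with hV
    have hsub : {gq : G ⧸ K |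
        dist (Quotient.mk (orbSetoid K S) a) (gq • Quotient.mk (orbSetoid K S) a) ≤ ε ∧
        dist (Quotient.mk (orbSetoid K S) b) (gq • Quotient.mk (orbSetoid K S) b) ≤ ε} ⊆
        ⋃ κ ∈ hfin.toFinset, QuotientGroup.mk '' (V κ) := by
      intro gq hgq
      obtain ⟨hgq1, hgq2⟩ := hgq
      have hout : (QuotientGroup.mk (Quotient.out gq) : G ⧸ K) = gq := QuotientGroup.out_eq' gq
      set g := Quotient.out gq with hg
      rw [← hout, hsmulmk, hdistmk] at hgq1
      rw [← hout, ← hb'mk, hsmulmk, hdistmk] at hgq2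
      obtain ⟨k₁, hk₁, he₁⟩ := preD_exists hfin a (g • a)
      obtain ⟨k₂, hk₂, he₂⟩ := preD_exists hfin (k₀ • b) (g • (k₀ • b))
      rw [he₁] at hgq1
      rw [he₂] at hgq2
      have hκ : k₂ * k₁⁻¹ ∈ K := K.mul_mem hk₂ (K.inv_mem hk₁)
      refine Set.mem_biUnion (hfin.mem_toFinset.mpr hκ) ?_
      refine ⟨k₁ * g, ⟨?_, ?_⟩, ?_⟩
      · rw [mul_smul]
        exact hgq1
      · have he3 : (k₂ * k₁⁻¹) • (k₁ * g) • (k₀ • b) = k₂ • (g • (k₀ • b)) := by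
          rw [smul_smul ((k₂ : G) * k₁⁻¹) (k₁ * g), smul_smul k₂ g]
          congr 1
          group
        rw [he3]
        exact hgq2
      · have : (QuotientGroup.mk (k₁ * g) : G ⧸ K) = QuotientGroup.mk g := by
          apply (QuotientGroup.eq).mpr
          have : (k₁ * g)⁻¹ * g = g⁻¹ * k₁⁻¹ * g := by group
          rw [this]
          have := hN.conj_mem k₁⁻¹ (K.inv_mem hk₁) g⁻¹
          simpa [mul_assoc] using this
        rw [this, hout]
    calc ({gq : G ⧸ K |
        dist (Quotient.mk (orbSetoid K S) a) (gq • Quotient.mk (orbSetoid K S) a) ≤ ε ∧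
        dist (Quotient.mk (orbSetoid K S) b) (gq • Quotient.mk (orbSetoid K S) b) ≤ ε}).encard
        ≤ (⋃ κ ∈ hfin.toFinset, QuotientGroup.mk '' (V κ)).encard := Set.encard_le_encard hsub
      _ ≤ ∑ κ ∈ hfin.toFinset, (QuotientGroup.mk '' (V κ)).encard := encard_biUnion_le'' _ _
      _ ≤ ∑ _κ ∈ hfin.toFinset, (N₂ : ℕ∞) := by
        refine Finset.sum_le_sum fun κ _ => ?_
        refine le_trans (Set.encard_image_le _ _) ?_
        rcases Set.eq_empty_or_nonempty (V κ) with hVe | ⟨v₀, hv₀⟩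
        · rw [hVe]
          simp
        · have hinj : Set.InjOn (fun v => v₀⁻¹ * v) (V κ) :=
            (mul_right_injective v₀⁻¹).injOn
          have himg : (fun v => v₀⁻¹ * v) '' (V κ) ⊆
              {u : G | dist a (u • a) ≤ 2*ε ∧ dist (k₀ • b) (u • (k₀ • b)) ≤ 2*ε} := by
            rintro - ⟨v, hv, rfl⟩
            obtain ⟨hv1, hv2⟩ := hv
            obtain ⟨hv₀1, hv₀2⟩ := hv₀
            constructor
            · have h5 : v₀ • (v₀⁻¹ * v) • a = v • a := by
                rw [smul_smul]
                congr 1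
                group
              have e1 : dist a ((v₀⁻¹ * v) • a) = dist (v₀ • a) (v • a) := by
                have := hiso v₀ a ((v₀⁻¹ * v) • a)
                rw [h5] at this
                exact this.symm
              rw [e1]
              have := dist_triangle (v₀ • a) a (v • a)
              have o := dist_comm (v₀ • a) a
              linarith
            · have h6 : v₀ • (v₀⁻¹ * v) • (k₀ • b) = v • (k₀ • b) := by
                rw [smul_smul]
                congr 1
                group
              have e2 : dist (k₀ • b) ((v₀⁻¹ * v) • (k₀ • b)) =
                  dist (v₀ • (k₀ • b)) (v • (k₀ • b)) := by
                have := hiso v₀ (k₀ • b) ((v₀⁻¹ * v) • (k₀ • b))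
                rw [h6] at this
                exact this.symm
              have e3 : dist (v₀ • (k₀ • b)) (v • (k₀ • b)) =
                  dist (κ • v₀ • (k₀ • b)) (κ • v • (k₀ • b)) := (hiso κ _ _).symm
              have := dist_triangle (κ • v₀ • (k₀ • b)) (k₀ • b) (κ • v • (k₀ • b))
              have o := dist_comm (κ • v₀ • (k₀ • b)) (k₀ • b)
              rw [e2, e3]
              linarith
          have heq : ((fun v => v₀⁻¹ * v) '' (V κ)).encard = (V κ).encard :=
            Set.InjOn.encard_image hinj
          rw [← heq]
          exact le_trans (Set.encard_le_encard himg) hU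
      _ = hfin.toFinset.card • (N₂ : ℕ∞) := by rw [Finset.sum_const]
      _ ≤ ((N₂ * hfin.toFinset.card : ℕ) : ℕ∞) := by
        rw [nsmul_eq_mul, Nat.cast_mul, mul_comm]
  · -- unbounded orbits
    refine ⟨Quotient.mk (orbSetoid K S) s₀, fun hb => hs₀ ?_⟩
    rw [Metric.isBounded_iff] at hb
    obtain ⟨C, hC⟩ := hb
    set C₀ : ℝ := hfin.toFinset.sup' (KFne hfin) (fun k => dist s₀ (k • s₀)) with hC₀
    rw [Metric.isBounded_iff_subset_closedBall s₀]
    refine ⟨C₀ + C, ?_⟩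
    rintro - ⟨g, rfl⟩
    have h1 : dist (Quotient.mk (orbSetoid K S) s₀)
        ((QuotientGroup.mk g : G ⧸ K) • Quotient.mk (orbSetoid K S) s₀) ≤ C :=
      hC (Set.mem_range.mpr ⟨1, by rw [one_smul]⟩) (Set.mem_range.mpr ⟨QuotientGroup.mk g, rfl⟩)
    rw [hsmulmk, hdistmk] at h1
    obtain ⟨k, hk, he⟩ := preD_exists hfin s₀ (g • s₀)
    rw [he] at h1
    have h2 : dist s₀ (k⁻¹ • s₀) ≤ C₀ := by
      rw [hC₀]
      exact Finset.le_sup' (fun k => dist s₀ (k • s₀)) (hfin.mem_toFinset.mpr (K.inv_mem hk))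
    have h3 : dist (k⁻¹ • s₀) (g • s₀) = dist s₀ (k • (g • s₀)) := by
      have := hiso k (k⁻¹ • s₀) (g • s₀)
      rw [smul_inv_smul] at this
      exact this.symm
    have h4 : dist s₀ (g • s₀) ≤ dist s₀ (k⁻¹ • s₀) + dist (k⁻¹ • s₀) (g • s₀) :=
      dist_triangle _ _ _
    rw [h3] at h4
    simp only [Metric.mem_closedBall, dist_comm (g • s₀) s₀]
    linarith
end Forward

/-- Let `K` be a finite normal subgroup of `G`. Then `G` is acylindrically hyperbolic
if and only if the quotient `G ⧸ K` is acylindrically hyperbolic. -/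
theorem statement_10 {G : Type*} [Group G] (K : Subgroup G) [K.Normal]
    (hfin : (K : Set G).Finite) :
    AcylindricallyHyperbolic G ↔ AcylindricallyHyperbolic (G ⧸ K) := by
  constructor
  · rintro ⟨hnVC, S, mS, act, hiso, hhyp, hacyl, hunb⟩
    refine ⟨fun hvc => hnVC (vc_of_quotient_vc K hfin hvc), ?_⟩
    obtain ⟨hgeo, δ, hδ, hthin⟩ := hhyp
    obtain ⟨Q, mQ, actQ, hisoQ, ⟨hgeoQ, δ', hδ', hthinQ⟩, hacylQ, hunbQ⟩ :=
      forward_space K hfin S hiso hgeo hδ hthin hacyl hunb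
    exact ⟨Q, mQ, actQ, hisoQ, ⟨hgeoQ, δ', hδ', hthinQ⟩, hacylQ, hunbQ⟩
  · rintro ⟨hnVC, T, mT, actT, hiso, hhyp, hacyl, hunb⟩
    refine ⟨fun hvc => hnVC (vc_quotient_of_vc K hvc), ?_⟩
    obtain ⟨actG, hisoG, hacylG, hunbG⟩ := backward_space K hfin T hacyl hunb hiso
    exact ⟨T, mT, actG, hisoG, hhyp, hacylG, hunbG⟩
end

section
/- Let G be a group, H a subgroup of G, and X ⊆ G such that H is hyperbolically embedded in G with respect to X. Then H is almost malnormal in G: for every g ∈ G \ H, the intersection g⁻¹Hg ∩ H is finite. -/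
namespace RelCayley

variable {G : Type*} [Group G] (X : Set G) (H : Subgroup G)

/-- A directed edge-letter of the Cayley graph `Γ(G, X ⊔ H)`: a letter of the disjoint
alphabet `X ⊔ H` together with a direction of traversal (`true` = positively). -/
def Letter : Type _ := (↥X ⊕ ↥H) × Bool

/-- The element of `G` by which a traversed letter multiplies the current vertex. -/
def letterVal : Letter X H → G
  | (Sum.inl a, true) => (a : G)
  | (Sum.inl a, false) => (a : G)⁻¹
  | (Sum.inr h, true) => (h : G)
  | (Sum.inr h, false) => (h : G)⁻¹

/-- The element of `G` represented by an edge-path (read as a word). -/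
def pathProd (w : List (Letter X H)) : G := (w.map (letterVal X H)).prod

/-- The combinatorial distance between two vertices of `Γ(G, X ⊔ H)`:
the smallest length of an edge-path joining them. -/
noncomputable def relDist (f g : G) : ℕ :=
  sInf {n : ℕ | ∃ w : List (Letter X H), w.length = n ∧ f * pathProd X H w = g}

/-- `w` is a geodesic edge-path from `f` to `g` in `Γ(G, X ⊔ H)`. -/
def IsGeodesicWord (f g : G) (w : List (Letter X H)) : Prop :=
  f * pathProd X H w = g ∧ w.length = relDist X H f g

/-- The list of vertices visited by the edge-path `w` starting at the vertex `f`. -/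
def vertices (f : G) (w : List (Letter X H)) : List G :=
  w.scanl (fun u ℓ => u * letterVal X H ℓ) f

/-- The graph `Γ(G, X ⊔ H)` is hyperbolic: for some `δ`, each side of every geodesic
triangle lies in the `δ`-neighborhood of the union of the other two sides. -/
def GraphHyperbolic : Prop :=
  ∃ δ : ℕ, ∀ (x y z : G) (w₁ w₂ w₃ : List (Letter X H)),
    IsGeodesicWord X H x y w₁ → IsGeodesicWord X H y z w₂ → IsGeodesicWord X H x z w₃ →
      (∀ u ∈ vertices X H x w₁, ∃ v,
        (v ∈ vertices X H y w₂ ∨ v ∈ vertices X H x w₃) ∧ relDist X H u v ≤ δ) ∧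
      (∀ u ∈ vertices X H y w₂, ∃ v,
        (v ∈ vertices X H x w₁ ∨ v ∈ vertices X H x w₃) ∧ relDist X H u v ≤ δ) ∧
      (∀ u ∈ vertices X H x w₃, ∃ v,
        (v ∈ vertices X H x w₁ ∨ v ∈ vertices X H y w₂) ∧ relDist X H u v ≤ δ)

/-- An edge-path starting at the vertex `1` contains no edge of `Γ_H` (the complete
subgraph with vertex set `H` and edges labeled by letters of `H`): whenever a letter
from `H` is traversed, the current vertex (hence also the next one) lies outside `H`. -/
def AvoidsGammaH (w : List (Letter X H)) : Prop :=
  ∀ i : Fin w.length, ((w.get i).1.isRight = true) → pathProd X H (w.take i) ∉ H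

/-- `H` is hyperbolically embedded in `G` with respect to `X`: `G = ⟨X ∪ H⟩`, the
Cayley graph `Γ(G, X ⊔ H)` is hyperbolic, and for every `n` only finitely many `h ∈ H`
can be joined to `1` by a path of length at most `n` avoiding the edges of `Γ_H`. -/
def HypEmbedded : Prop :=
  Subgroup.closure (X ∪ (H : Set G)) = ⊤ ∧
  GraphHyperbolic X H ∧
  ∀ n : ℕ, {h : ↥H | ∃ w : List (Letter X H),
      w.length ≤ n ∧ pathProd X H w = (h : G) ∧ AvoidsGammaH X H w}.Finite

end RelCayley

namespace RelCayley

variable {G : Type*} [Group G] (X : Set G) (H : Subgroup G)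

/-- Inverse of a letter: same letter, opposite direction. -/
def linv : Letter X H → Letter X H := fun l => (l.1, !l.2)

/-- The positively-oriented letter corresponding to an element of `H`. -/
def hLetter (h : ↥H) : Letter X H := (Sum.inr h, true)

lemma letterVal_hLetter (h : ↥H) : letterVal X H (hLetter X H h) = (h : G) := rfl

lemma letterVal_linv (l : Letter X H) :
    letterVal X H (linv X H l) = (letterVal X H l)⁻¹ := by
  rcases l with ⟨a | a, b | b⟩ <;> simp [linv, letterVal]

lemma letterVal_mem_of_isRight (l : Letter X H) (h : l.1.isRight = true) :
    letterVal X H l ∈ H := by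
  rcases l with ⟨a | a, b | b⟩ <;> simp_all [letterVal]

lemma pathProd_nil : pathProd X H [] = 1 := rfl

lemma pathProd_cons (l : Letter X H) (w : List (Letter X H)) :
    pathProd X H (l :: w) = letterVal X H l * pathProd X H w := by
  simp [pathProd]

lemma pathProd_append (w₁ w₂ : List (Letter X H)) :
    pathProd X H (w₁ ++ w₂) = pathProd X H w₁ * pathProd X H w₂ := by
  simp [pathProd]

lemma pathProd_reverse_linv (w : List (Letter X H)) :
    pathProd X H ((w.map (linv X H)).reverse) = (pathProd X H w)⁻¹ := by
  induction w with
  | nil => simp [pathProd]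
  | cons l w ih =>
      simp only [List.map_cons, List.reverse_cons, pathProd_append, pathProd_cons, ih,
        pathProd_nil, mul_one, letterVal_linv, mul_inv_rev]

lemma pathProd_take_reverse_linv (w : List (Letter X H)) (j : ℕ) :
    pathProd X H (((w.map (linv X H)).reverse).take j)
      = (pathProd X H w)⁻¹ * pathProd X H (w.take (w.length - j)) := by
  rw [List.take_reverse, List.length_map, ← List.map_drop, pathProd_reverse_linv]
  have h := pathProd_append X H (w.take (w.length - j)) (w.drop (w.length - j))
  rw [List.take_append_drop] at h
  rw [h, mul_inv_rev]
  group

lemma exists_word (hcl : Subgroup.closure (X ∪ (H : Set G)) = ⊤) (g : G) :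
    ∃ w : List (Letter X H), pathProd X H w = g := by
  have hg : g ∈ Subgroup.closure (X ∪ (H : Set G)) := by rw [hcl]; trivial
  induction hg using Subgroup.closure_induction with
  | mem s hs =>
      rcases hs with hs | hs
      · exact ⟨[(Sum.inl ⟨s, hs⟩, true)], by show letterVal X H _ * 1 = s; exact mul_one _⟩
      · exact ⟨[(Sum.inr ⟨s, hs⟩, true)], by show letterVal X H _ * 1 = s; exact mul_one _⟩
  | one => exact ⟨[], rfl⟩
  | mul a b _ _ ha hb =>
      obtain ⟨w₁, h₁⟩ := ha; obtain ⟨w₂, h₂⟩ := hb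
      exact ⟨w₁ ++ w₂, by rw [pathProd_append, h₁, h₂]⟩
  | inv a _ ha =>
      obtain ⟨w, hw⟩ := ha
      exact ⟨(w.map (linv X H)).reverse, by rw [pathProd_reverse_linv, hw]⟩

end RelCayley

namespace RelCayley

variable {G : Type*} [Group G] (X : Set G) (H : Subgroup G)

lemma avoids_sandwich (W : List (Letter X H)) (a : G) (haH : a ∈ H)
    (haW : pathProd X H W ∉ H)
    (hmid : ∀ j, 0 < j → j ≤ W.length → pathProd X H (W.take j) ∉ H)
    (hx₁ : pathProd X H W * a * (pathProd X H W)⁻¹ ∈ H) :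
    AvoidsGammaH X H
      (W ++ (hLetter X H ⟨a, haH⟩ :: (W.map (linv X H)).reverse)) := by
  intro i hiR
  have hilt : (i : ℕ) < W.length + (1 + W.length) := by
    have h2 := i.2
    simp at h2
    omega
  rcases Nat.lt_trichotomy (i : ℕ) W.length with hc | hc | hc
  · rw [List.take_append_of_le_length hc.le]
    rcases Nat.eq_zero_or_pos (i : ℕ) with h0 | hpos
    · intro _
      have hl : (W ++ (hLetter X H ⟨a, haH⟩
          :: (W.map (linv X H)).reverse))[(i : ℕ)]?
          = some ((W ++ (hLetter X H ⟨a, haH⟩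
            :: (W.map (linv X H)).reverse)).get i) := by
        simp [List.getElem?_eq_getElem, List.get_eq_getElem]
      rw [h0, List.getElem?_append_left (by omega)] at hl
      have htake1 : W.take 1 = [(W ++ (hLetter X H ⟨a, haH⟩
          :: (W.map (linv X H)).reverse)).get i] := by
        rw [← List.head?_eq_getElem?] at hl
        rw [List.take_one, hl]
        rfl
      have hmem1 : pathProd X H (W.take 1) ∈ H := by
        rw [htake1, pathProd_cons, pathProd_nil, mul_one]
        exact letterVal_mem_of_isRight X H _ hiR
      exact hmid 1 one_pos (by omega) hmem1
    · exact hmid _ hpos hc.le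
  · rw [hc, List.take_left]
    exact haW
  · intro hmem
    have hieq : (i : ℕ) = W.length + (((i : ℕ) - W.length - 1) + 1) := by omega
    have hjlt : (i : ℕ) - W.length - 1 < W.length := by omega
    rw [hieq, List.take_length_add_append, List.take_succ_cons, pathProd_append, pathProd_cons,
      pathProd_take_reverse_linv] at hmem
    have hval : letterVal X H (hLetter X H ⟨a, haH⟩) = a := rfl
    rw [hval] at hmem
    have hv : pathProd X H (W.take (W.length - ((i : ℕ) - W.length - 1))) ∉ H :=
      hmid _ (by omega) (by omega)
    apply hv
    have hre : pathProd X H W *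
        (a * ((pathProd X H W)⁻¹ * pathProd X H (W.take (W.length - ((i : ℕ) - W.length - 1)))))
        = (pathProd X H W * a * (pathProd X H W)⁻¹)
            * pathProd X H (W.take (W.length - ((i : ℕ) - W.length - 1))) := by
      group
    rw [hre] at hmem
    have h2 := mul_mem (inv_mem hx₁) hmem
    rwa [← mul_assoc, inv_mul_cancel, one_mul] at h2

end RelCayley


/-- If `H` is hyperbolically embedded in `G` with respect to `X`, then `H` is almost
malnormal: for every `g ∉ H`, the intersection `g⁻¹Hg ∩ H` is finite. -/
theorem statement_18 {G : Type*} [Group G] (H : Subgroup G) (X : Set G)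
    (hhe : RelCayley.HypEmbedded X H) :
    ∀ g : G, g ∉ H → {x : G | x ∈ H ∧ g * x * g⁻¹ ∈ H}.Finite := by
  classical
  intro g hg
  obtain ⟨hcl, -, hfin⟩ := hhe
  obtain ⟨w0, hw0⟩ := RelCayley.exists_word X H hcl g⁻¹
  -- cut the word at the last vertex lying in H
  set P : ℕ → Prop := fun i => RelCayley.pathProd X H (w0.take i) ∈ H with hP
  set i₀ : ℕ := Nat.findGreatest P w0.length with hi₀
  have hP0 : P 0 := by
    show RelCayley.pathProd X H (w0.take 0) ∈ H
    simpa [RelCayley.pathProd] using one_mem H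
  have hi₀le : i₀ ≤ w0.length := by rw [hi₀]; exact Nat.findGreatest_le _
  have humem : RelCayley.pathProd X H (w0.take i₀) ∈ H :=
    Nat.findGreatest_spec (Nat.zero_le _) hP0
  set u : G := RelCayley.pathProd X H (w0.take i₀) with hu
  set W : List (RelCayley.Letter X H) := w0.drop i₀ with hWdef
  have hLlen : W.length = w0.length - i₀ := by rw [hWdef]; exact List.length_drop
  have hWprod : RelCayley.pathProd X H W = (g * u)⁻¹ := by
    have h1 : RelCayley.pathProd X H (w0.take i₀ ++ w0.drop i₀) = g⁻¹ := by
      rw [List.take_append_drop]; exact hw0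
    rw [RelCayley.pathProd_append, ← hu, ← hWdef] at h1
    rw [mul_inv_rev, ← h1]
    group
  have hg₁ : g * u ∉ H := fun h => hg (by
    have h2 : (g * u) * u⁻¹ ∈ H := mul_mem h (inv_mem humem)
    simpa using h2)
  have hWoutside : RelCayley.pathProd X H W ∉ H := by
    rw [hWprod]
    intro h
    exact hg₁ (by simpa using inv_mem h)
  have hWmid : ∀ j, 0 < j → j ≤ W.length → RelCayley.pathProd X H (W.take j) ∉ H := by
    intro j hj0 hjL hmem
    have hnP : ¬ P (i₀ + j) :=
      Nat.findGreatest_is_greatest (n := w0.length) (by rw [← hi₀]; omega) (by omega)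
    apply hnP
    show RelCayley.pathProd X H (w0.take (i₀ + j)) ∈ H
    rw [List.take_add, RelCayley.pathProd_append, ← hu, ← hWdef]
    exact mul_mem humem hmem
  -- the set injects (via conjugation by u) into a finite set
  apply Set.Finite.subset (Set.Finite.image (fun h : ↥H => u * (h : G) * u⁻¹)
    (hfin (2 * W.length + 1)))
  rintro x ⟨hxH, hxC⟩
  have hx₁H : u⁻¹ * x * u ∈ H := mul_mem (mul_mem (inv_mem humem) hxH) humem
  have hconjH : RelCayley.pathProd X H W * (g * x * g⁻¹) * (RelCayley.pathProd X H W)⁻¹ ∈ H := by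
    rw [hWprod]
    have h3 : (g * u)⁻¹ * (g * x * g⁻¹) * ((g * u)⁻¹)⁻¹ = u⁻¹ * x * u := by group
    rw [h3]
    exact hx₁H
  refine ⟨⟨u⁻¹ * x * u, hx₁H⟩,
    ⟨W ++ (RelCayley.hLetter X H ⟨g * x * g⁻¹, hxC⟩
        :: (W.map (RelCayley.linv X H)).reverse),
      ?_, ?_, RelCayley.avoids_sandwich X H W (g * x * g⁻¹) hxC hWoutside hWmid hconjH⟩,
    ?_⟩
  · simp
    omega
  · show RelCayley.pathProd X H _ = _
    rw [RelCayley.pathProd_append, RelCayley.pathProd_cons,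
      RelCayley.pathProd_reverse_linv, hWprod]
    show (g * u)⁻¹ * ((g * x * g⁻¹) * ((g * u)⁻¹)⁻¹) = u⁻¹ * x * u
    group
  · show u * (u⁻¹ * x * u) * u⁻¹ = x
    group
end
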